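/- arXiv:1608.08871 — 7 statements merged into one kernel-verified Lean document; each statement's English description precedes it below -/
import Mathlib

section
/- Let d ≥ 1, x₀ ∈ E = EuclideanSpace ℝ (Fin d), h > 0, and let A, φ : E → ℝ be twice continuously differentiable on B = closedBall(x₀, h) with ∇φ(x₀) ≠ 0. Set M_{A,0} := sup_B |A|, M_{A,1} := sup_B ‖∇A‖, M_{A,2} := sup_B ‖∇²A‖, M₂ := sup_B ‖∇²φ‖ (operator norms), k₀ := ω‖∇φ(x₀)‖, d̂ := ∇φ(x₀)/‖∇φ(x₀)‖, and define the affine complex amplitude B(x) := (A(x₀) + ⟨∇A(x₀), x − x₀⟩)·exp(i ω (φ(x₀) − ⟨∇φ(x₀), x₀⟩)). Then for every ω > 0 and every x with ‖x − x₀‖ ≤ h, |A(x)·exp(i ω φ(x)) − B(x)·exp(i k₀ ⟨d̂, x⟩)| ≤ (M_{A,2}/2)·h² + (M_{A,0} + M_{A,1} h)·(ω M₂/2)·h². -/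
open Complex Metric
open scoped InnerProductSpace BigOperators Topology

-- |e^{ia} - e^{ib}| ≤ |a - b|
lemma exp_I_lip (a b : ℝ) :
    ‖Complex.exp ((a:ℂ) * Complex.I) - Complex.exp ((b:ℂ) * Complex.I)‖ ≤ |a - b| := by
  have hfac : Complex.exp ((a:ℂ) * Complex.I) - Complex.exp ((b:ℂ) * Complex.I)
      = Complex.exp ((b:ℂ) * Complex.I) * (Complex.exp (((a - b : ℝ) : ℂ) * Complex.I) - 1) := by
    rw [mul_sub, mul_one, ← Complex.exp_add]
    push_cast
    ring_nf
  rw [hfac, norm_mul, Complex.norm_exp_ofReal_mul_I, one_mul]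
  set c := a - b
  have h1 : Complex.exp ((c:ℂ) * Complex.I) - 1
      = ⟨Real.cos c - 1, Real.sin c⟩ := by
    rw [Complex.exp_mul_I]
    apply Complex.ext <;>
      simp [Complex.cos_ofReal_re, Complex.sin_ofReal_re]
  rw [h1]
  have : ‖(⟨Real.cos c - 1, Real.sin c⟩ : ℂ)‖
      = Real.sqrt ((Real.cos c - 1)^2 + (Real.sin c)^2) := by
    rw [Complex.norm_def, Complex.normSq_mk]; ring_nf
  rw [this]
  have h2 : (Real.cos c - 1)^2 + (Real.sin c)^2 = (2 * |Real.sin (c/2)|)^2 := by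
    have hs := Real.sin_sq_eq_half_sub (c/2)
    rw [show 2*(c/2) = c by ring] at hs
    have := Real.sin_sq_add_cos_sq c
    rw [mul_pow, _root_.sq_abs]
    nlinarith
  rw [h2, Real.sqrt_sq (by positivity)]
  calc 2 * |Real.sin (c/2)| ≤ 2 * |c/2| := by
        have := Real.abs_sin_le_abs (x := c/2); linarith
    _ = |c| := by rw [abs_div]; simp; ring

-- Quadratic Taylor remainder bound on a convex set
lemma quad_taylor {E F : Type*} [NormedAddCommGroup E] [NormedSpace ℝ E]
    [NormedAddCommGroup F] [NormedSpace ℝ F]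
    {s : Set E} (hs : Convex ℝ s) {f : E → F} {f' : E → E →L[ℝ] F}
    {f'' : E → E →L[ℝ] E →L[ℝ] F} {C : ℝ} (hC : 0 ≤ C)
    (hf : ∀ y ∈ s, HasFDerivWithinAt f (f' y) s y)
    (hf' : ∀ y ∈ s, HasFDerivWithinAt f' (f'' y) s y)
    (hbound : ∀ y ∈ s, ‖f'' y‖ ≤ C)
    {x₀ x : E} (hx₀ : x₀ ∈ s) (hx : x ∈ s) :
    ‖f x - f x₀ - f' x₀ (x - x₀)‖ ≤ C / 2 * ‖x - x₀‖ ^ 2 := by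
  set v := x - x₀ with hv
  have hseg : ∀ t ∈ Set.Icc (0:ℝ) 1, x₀ + t • v ∈ s := fun t ht =>
    hs.add_smul_sub_mem hx₀ hx ht
  have lip : ∀ y ∈ s, ‖f' y - f' x₀‖ ≤ C * ‖y - x₀‖ := fun y hy =>
    hs.norm_image_sub_le_of_norm_hasFDerivWithin_le hf' hbound hx₀ hy
  set g : ℝ → F := fun t => f (x₀ + t • v) - t • (f' x₀ v) - f x₀ with hg
  have hpath : ∀ t : ℝ, HasDerivAt (fun t : ℝ => x₀ + t • v) v t := by
    intro t
    simpa using ((hasDerivAt_id t).smul_const v).const_add x₀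
  have hgd : ∀ t ∈ Set.Icc (0:ℝ) 1,
      HasDerivWithinAt g (f' (x₀ + t • v) v - f' x₀ v) (Set.Icc 0 1) t := by
    intro t ht
    have h1 : HasDerivWithinAt (fun t : ℝ => f (x₀ + t • v)) (f' (x₀ + t • v) v)
        (Set.Icc 0 1) t :=
      (hf _ (hseg t ht)).comp_hasDerivWithinAt t ((hpath t).hasDerivWithinAt) hseg
    have h2 : HasDerivAt (fun t : ℝ => t • (f' x₀ v)) (f' x₀ v) t := by
      simpa using (hasDerivAt_id t).smul_const (f' x₀ v)
    simpa [hg] using (h1.sub h2.hasDerivWithinAt).sub_const (f x₀)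
  have key : ∀ t ∈ Set.Icc (0:ℝ) 1, ‖g t‖ ≤ C * ‖v‖^2 * t^2 / 2 := by
    intro t ht
    refine image_norm_le_of_norm_deriv_right_le_deriv_boundary
      (f := g) (a := 0) (b := 1)
      (fun u hu => (hgd u hu).continuousWithinAt)
      (fun u hu => ((hgd u (Set.Ico_subset_Icc_self hu)).mono_of_mem_nhdsWithin
        (Icc_mem_nhdsGE_of_mem hu)))
      (by simp [hg])
      (B := fun t => C * ‖v‖^2 * t^2 / 2) (B' := fun t => C * ‖v‖^2 * t)
      (fun u => by
        have := ((hasDerivAt_pow 2 u).const_mul (C * ‖v‖^2)).div_const 2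
        refine this.congr_deriv ?_
        push_cast
        ring)
      (fun u hu => ?_) ht
    have h1 : ‖f' (x₀ + u • v) v - f' x₀ v‖ ≤ ‖f' (x₀ + u • v) - f' x₀‖ * ‖v‖ := by
      have := (f' (x₀ + u • v) - f' x₀).le_opNorm v
      simpa using this
    have h2 : ‖f' (x₀ + u • v) - f' x₀‖ ≤ C * (u * ‖v‖) := by
      have := lip _ (hseg u (Set.Ico_subset_Icc_self hu))
      simpa [norm_smul, _root_.abs_of_nonneg hu.1] using this
    calc ‖f' (x₀ + u • v) v - f' x₀ v‖ ≤ (C * (u * ‖v‖)) * ‖v‖ :=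
          h1.trans (by
            have hvn : (0:ℝ) ≤ ‖v‖ := norm_nonneg _
            exact mul_le_mul_of_nonneg_right h2 hvn)
      _ = C * ‖v‖^2 * u := by ring
  have h1 := key 1 (by norm_num)
  have hgx : g 1 = f x - f x₀ - f' x₀ v := by
    simp only [hg, hv, one_smul, add_sub_cancel]
    abel
  rw [hgx] at h1
  calc ‖f x - f x₀ - f' x₀ v‖ ≤ C * ‖v‖^2 * 1^2 / 2 := h1
    _ = C / 2 * ‖v‖^2 := by ring
set_option maxHeartbeats 1000000 in
/-- Local plane-wave approximation of a geometric-optics wave front `A(x)e^{iωφ(x)}`: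
near `x₀` it is approximated by the plane wave `e^{ik₀⟨d̂, x⟩}` in the ray direction
`d̂ = ∇φ(x₀)/‖∇φ(x₀)‖` with `k₀ = ω‖∇φ(x₀)‖`, multiplied by the affine complex amplitude
`B(x) = (A(x₀) + ⟨∇A(x₀), x − x₀⟩)e^{iω(φ(x₀) − ⟨∇φ(x₀), x₀⟩)}`, with error
`(M_{A,2}/2)h² + (M_{A,0} + M_{A,1}h)(ωM₂/2)h²`. -/
theorem stmt_3 {d : ℕ} (hd : 1 ≤ d)
    (x₀ : EuclideanSpace ℝ (Fin d)) (h : ℝ) (hh : 0 < h)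
    (A φ : EuclideanSpace ℝ (Fin d) → ℝ)
    (hA : ContDiffOn ℝ 2 A (closedBall x₀ h))
    (hφ : ContDiffOn ℝ 2 φ (closedBall x₀ h))
    (hgrad : gradient φ x₀ ≠ 0)
    (MA0 MA1 MA2 M₂ : ℝ)
    (hMA0 : ∀ y ∈ closedBall x₀ h, |A y| ≤ MA0)
    (hMA1 : ∀ y ∈ closedBall x₀ h, ‖fderivWithin ℝ A (closedBall x₀ h) y‖ ≤ MA1)
    (hMA2 : ∀ y ∈ closedBall x₀ h,
      ‖fderivWithin ℝ (fun z => fderivWithin ℝ A (closedBall x₀ h) z)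
          (closedBall x₀ h) y‖ ≤ MA2)
    (hM₂ : ∀ y ∈ closedBall x₀ h,
      ‖fderivWithin ℝ (fun z => fderivWithin ℝ φ (closedBall x₀ h) z)
          (closedBall x₀ h) y‖ ≤ M₂) :
    ∀ ω : ℝ, 0 < ω → ∀ x : EuclideanSpace ℝ (Fin d), ‖x - x₀‖ ≤ h →
      ‖(A x : ℂ) * Complex.exp (Complex.I * (ω : ℂ) * (φ x : ℂ))
          - ((A x₀ + ⟪gradient A x₀, x - x₀⟫_ℝ : ℝ) : ℂ)
              * Complex.exp (Complex.I * (ω : ℂ)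
                  * ((φ x₀ - ⟪gradient φ x₀, x₀⟫_ℝ : ℝ) : ℂ))
              * Complex.exp (Complex.I * ((ω * ‖gradient φ x₀‖ : ℝ) : ℂ)
                  * ((⟪(‖gradient φ x₀‖)⁻¹ • gradient φ x₀, x⟫_ℝ : ℝ) : ℂ))‖
        ≤ MA2 / 2 * h ^ 2 + (MA0 + MA1 * h) * (ω * M₂ / 2) * h ^ 2 := by
  intro ω hω x hx
  set s := closedBall x₀ h with hsdef
  have hx₀s : x₀ ∈ s := mem_closedBall_self hh.le
  have hxs : x ∈ s := by rw [hsdef, mem_closedBall, dist_eq_norm]; exact hx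
  have hconv : Convex ℝ s := convex_closedBall x₀ h
  have hu : UniqueDiffOn ℝ s := uniqueDiffOn_convex hconv
    (by rw [hsdef, interior_closedBall x₀ hh.ne']; exact nonempty_ball.2 hh)
  have hnh : s ∈ 𝓝 x₀ := closedBall_mem_nhds x₀ hh
  -- nonnegativity
  have hMA0' : 0 ≤ MA0 := le_trans (abs_nonneg _) (hMA0 x₀ hx₀s)
  have hMA1' : 0 ≤ MA1 := le_trans (norm_nonneg _) (hMA1 x₀ hx₀s)
  have hMA2' : 0 ≤ MA2 := le_trans (norm_nonneg (fderivWithin ℝ (fun z => fderivWithin ℝ A s z) s x₀)) (hMA2 x₀ hx₀s)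
  have hM₂' : 0 ≤ M₂ := le_trans (norm_nonneg (fderivWithin ℝ (fun z => fderivWithin ℝ φ s z) s x₀)) (hM₂ x₀ hx₀s)
  -- Taylor for A
  have hAd : ∀ y ∈ s, HasFDerivWithinAt A (fderivWithin ℝ A s y) s y :=
    fun y hy => ((hA.differentiableOn (by norm_num)) y hy).hasFDerivWithinAt
  have hA1 : ContDiffOn ℝ 1 (fderivWithin ℝ A s) s := hA.fderivWithin hu (by norm_num)
  have hAd2 : ∀ y ∈ s, HasFDerivWithinAt (fun z => fderivWithin ℝ A s z)
      (fderivWithin ℝ (fun z => fderivWithin ℝ A s z) s y) s y :=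
    fun y hy => ((hA1.differentiableOn one_ne_zero) y hy).hasFDerivWithinAt
  have taylorA := quad_taylor hconv hMA2' hAd hAd2 hMA2 hx₀s hxs
  -- Taylor for φ
  have hφd : ∀ y ∈ s, HasFDerivWithinAt φ (fderivWithin ℝ φ s y) s y :=
    fun y hy => ((hφ.differentiableOn (by norm_num)) y hy).hasFDerivWithinAt
  have hφ1 : ContDiffOn ℝ 1 (fderivWithin ℝ φ s) s := hφ.fderivWithin hu (by norm_num)
  have hφd2 : ∀ y ∈ s, HasFDerivWithinAt (fun z => fderivWithin ℝ φ s z)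
      (fderivWithin ℝ (fun z => fderivWithin ℝ φ s z) s y) s y :=
    fun y hy => ((hφ1.differentiableOn one_ne_zero) y hy).hasFDerivWithinAt
  have taylorφ := quad_taylor hconv hM₂' hφd hφd2 hM₂ hx₀s hxs
  -- gradient identities
  have hfwA : fderivWithin ℝ A s x₀ = fderiv ℝ A x₀ := fderivWithin_of_mem_nhds hnh
  have hfwφ : fderivWithin ℝ φ s x₀ = fderiv ℝ φ x₀ := fderivWithin_of_mem_nhds hnh
  have hgA : ∀ w, ⟪gradient A x₀, w⟫_ℝ = fderivWithin ℝ A s x₀ w := fun w => by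
    rw [hfwA, gradient, InnerProductSpace.toDual_symm_apply]
  have hgφ : ∀ w, ⟪gradient φ x₀, w⟫_ℝ = fderivWithin ℝ φ s x₀ w := fun w => by
    rw [hfwφ, gradient, InnerProductSpace.toDual_symm_apply]
  have hnormgA : ‖gradient A x₀‖ ≤ MA1 := by
    rw [gradient, LinearIsometryEquiv.norm_map, ← hfwA]
    exact hMA1 x₀ hx₀s
  have hgφne : ‖gradient φ x₀‖ ≠ 0 := norm_ne_zero_iff.2 hgrad
  -- abbreviations
  set T : ℝ := A x₀ + ⟪gradient A x₀, x - x₀⟫_ℝ with hT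
  set L : ℝ := φ x₀ + ⟪gradient φ x₀, x - x₀⟫_ℝ with hL
  -- combine the two plane-wave exponentials
  have hcomb : Complex.exp (Complex.I * (ω : ℂ)
        * ((φ x₀ - ⟪gradient φ x₀, x₀⟫_ℝ : ℝ) : ℂ))
      * Complex.exp (Complex.I * ((ω * ‖gradient φ x₀‖ : ℝ) : ℂ)
        * ((⟪(‖gradient φ x₀‖)⁻¹ • gradient φ x₀, x⟫_ℝ : ℝ) : ℂ))
      = Complex.exp (((ω * L : ℝ) : ℂ) * Complex.I) := by
    rw [← Complex.exp_add]
    congr 1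
    have hq : ⟪(‖gradient φ x₀‖)⁻¹ • gradient φ x₀, x⟫_ℝ
        = (‖gradient φ x₀‖)⁻¹ * ⟪gradient φ x₀, x⟫_ℝ := real_inner_smul_left _ _ _
    have hr : ω * (φ x₀ - ⟪gradient φ x₀, x₀⟫_ℝ)
        + (ω * ‖gradient φ x₀‖) * ((‖gradient φ x₀‖)⁻¹ * ⟪gradient φ x₀, x⟫_ℝ)
        = ω * L := by
      rw [hL, inner_sub_right]
      field_simp
      ring
    have hrC : ((ω * (φ x₀ - ⟪gradient φ x₀, x₀⟫_ℝ)
        + (ω * ‖gradient φ x₀‖) * ((‖gradient φ x₀‖)⁻¹ * ⟪gradient φ x₀, x⟫_ℝ) : ℝ) : ℂ)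
        = ((ω * L : ℝ) : ℂ) := by exact_mod_cast congrArg (fun r : ℝ => (r : ℂ)) hr
    rw [hq]
    push_cast
    push_cast at hrC
    linear_combination (Complex.I : ℂ) * hrC
  -- rewrite the first exponential too
  have hfirst : Complex.I * (ω : ℂ) * (φ x : ℂ) = ((ω * φ x : ℝ) : ℂ) * Complex.I := by
    push_cast; ring
  -- main split
  have split : (A x : ℂ) * Complex.exp (Complex.I * (ω : ℂ) * (φ x : ℂ))
      - ((T : ℝ) : ℂ) * Complex.exp (Complex.I * (ω : ℂ)
          * ((φ x₀ - ⟪gradient φ x₀, x₀⟫_ℝ : ℝ) : ℂ))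
        * Complex.exp (Complex.I * ((ω * ‖gradient φ x₀‖ : ℝ) : ℂ)
          * ((⟪(‖gradient φ x₀‖)⁻¹ • gradient φ x₀, x⟫_ℝ : ℝ) : ℂ))
      = ((A x - T : ℝ) : ℂ) * Complex.exp (((ω * φ x : ℝ) : ℂ) * Complex.I)
        + ((T : ℝ) : ℂ) * (Complex.exp (((ω * φ x : ℝ) : ℂ) * Complex.I)
            - Complex.exp (((ω * L : ℝ) : ℂ) * Complex.I)) := by
    rw [hfirst, mul_assoc, hcomb]
    push_cast
    ring
  rw [split]
  -- bound the two pieces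
  have hb1 : ‖((A x - T : ℝ) : ℂ)
      * Complex.exp (((ω * φ x : ℝ) : ℂ) * Complex.I)‖ ≤ MA2 / 2 * h ^ 2 := by
    rw [norm_mul, Complex.norm_exp_ofReal_mul_I, mul_one, Complex.norm_real, Real.norm_eq_abs]
    have : A x - T = A x - A x₀ - fderivWithin ℝ A s x₀ (x - x₀) := by
      rw [hT, hgA]; ring
    rw [this]
    calc |A x - A x₀ - fderivWithin ℝ A s x₀ (x - x₀)| ≤ MA2 / 2 * ‖x - x₀‖ ^ 2 := taylorA
      _ ≤ MA2 / 2 * h ^ 2 := by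
          have := pow_le_pow_left₀ (norm_nonneg (x - x₀)) hx 2
          nlinarith
  have hTb : |T| ≤ MA0 + MA1 * h := by
    rw [hT]
    calc |A x₀ + ⟪gradient A x₀, x - x₀⟫_ℝ|
        ≤ |A x₀| + |⟪gradient A x₀, x - x₀⟫_ℝ| := abs_add_le _ _
      _ ≤ MA0 + MA1 * h := by
          have h1 := abs_real_inner_le_norm (gradient A x₀) (x - x₀)
          have h2 : ‖gradient A x₀‖ * ‖x - x₀‖ ≤ MA1 * h :=
            mul_le_mul hnormgA hx (norm_nonneg _) hMA1'
          have := hMA0 x₀ hx₀s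
          linarith
  have hb2 : ‖((T : ℝ) : ℂ) * (Complex.exp (((ω * φ x : ℝ) : ℂ) * Complex.I)
      - Complex.exp (((ω * L : ℝ) : ℂ) * Complex.I))‖
      ≤ (MA0 + MA1 * h) * (ω * M₂ / 2) * h ^ 2 := by
    rw [norm_mul, Complex.norm_real, Real.norm_eq_abs]
    have hexp := exp_I_lip (ω * φ x) (ω * L)
    have hφL : |ω * φ x - ω * L| ≤ ω * (M₂ / 2 * h ^ 2) := by
      rw [show ω * φ x - ω * L = ω * (φ x - L) by ring, abs_mul, abs_of_pos hω]
      have : φ x - L = φ x - φ x₀ - fderivWithin ℝ φ s x₀ (x - x₀) := by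
        rw [hL, hgφ]; ring
      rw [this]
      have hb : |φ x - φ x₀ - fderivWithin ℝ φ s x₀ (x - x₀)| ≤ M₂ / 2 * h ^ 2 := by
        calc |φ x - φ x₀ - fderivWithin ℝ φ s x₀ (x - x₀)| ≤ M₂ / 2 * ‖x - x₀‖ ^ 2 := taylorφ
          _ ≤ M₂ / 2 * h ^ 2 := by
              have := pow_le_pow_left₀ (norm_nonneg (x - x₀)) hx 2
              nlinarith
      exact mul_le_mul_of_nonneg_left hb hω.le
    have habs : ‖Complex.exp (((ω * φ x : ℝ) : ℂ) * Complex.I)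
        - Complex.exp (((ω * L : ℝ) : ℂ) * Complex.I)‖ ≤ ω * (M₂ / 2 * h ^ 2) :=
      hexp.trans hφL
    calc |T| * ‖Complex.exp (((ω * φ x : ℝ) : ℂ) * Complex.I)
          - Complex.exp (((ω * L : ℝ) : ℂ) * Complex.I)‖
        ≤ (MA0 + MA1 * h) * (ω * (M₂ / 2 * h ^ 2)) :=
          mul_le_mul hTb habs (norm_nonneg _)
            (add_nonneg hMA0' (mul_nonneg hMA1' hh.le))
      _ = (MA0 + MA1 * h) * (ω * M₂ / 2) * h ^ 2 := by ring
  exact le_trans (norm_add_le _ _) (add_le_add hb1 hb2)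
end

section
/- Let d ≥ 1, Ω ⊆ E = EuclideanSpace ℝ (Fin d), h > 0, J a finite index set, nodes x_j ∈ E for j ∈ J, and functions φ_j : E → ℝ with 0 ≤ φ_j(x) ≤ 1 for all x, Σ_{j∈J} φ_j(x) = 1 for every x ∈ Ω, and φ_j(x) = 0 whenever ‖x − x_j‖ > h. Let φ : E → ℝ be twice continuously differentiable with ‖∇²φ(y)‖ ≤ M₂ (operator norm) for all y ∈ E, let a_j ∈ ℝ with |a_j| ≤ M₀ for all j ∈ J, and set ℓ_j(x) := φ(x_j) + ⟨∇φ(x_j), x − x_j⟩. Then for every ω > 0 and every x ∈ Ω, |Σ_{j∈J} a_j φ_j(x)·(exp(i ω φ(x)) − exp(i ω ℓ_j(x)))| ≤ (ω h² M₂ M₀)/2. -/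
open Complex
open scoped InnerProductSpace BigOperators

/-- The map `t ↦ e^{it}` is 1-Lipschitz. -/
lemma exp_I_lipschitz (s t : ℝ) :
    ‖Complex.exp (Complex.I * s) - Complex.exp (Complex.I * t)‖ ≤ |s - t| := by
  have hder : ∀ u : ℝ, HasDerivAt (fun r : ℝ => Complex.exp (Complex.I * r))
      (Complex.exp (Complex.I * u) * Complex.I) u := by
    intro u
    have h1 : HasDerivAt (fun r : ℝ => Complex.I * (r : ℂ)) Complex.I u := by
      simpa using (Complex.ofRealCLM.hasDerivAt (x := u)).const_mul Complex.I
    simpa using h1.cexp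
  have := Convex.norm_image_sub_le_of_norm_hasDerivWithin_le
    (f := fun r : ℝ => Complex.exp (Complex.I * r))
    (f' := fun u => Complex.exp (Complex.I * u) * Complex.I) (C := 1) (s := Set.univ)
    (fun u _ => (hder u).hasDerivWithinAt)
    (fun u _ => by
      rw [norm_mul, Complex.norm_I, mul_one,
        Complex.norm_exp]
      simp)
    convex_univ (Set.mem_univ t) (Set.mem_univ s)
  simpa [Real.norm_eq_abs] using this

/-- First-order Taylor bound with Hessian bound. -/
lemma taylor_bound {d : ℕ} (φ : EuclideanSpace ℝ (Fin d) → ℝ) (hφ : ContDiff ℝ 2 φ)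
    (M₂ : ℝ) (hM₂ : ∀ y, ‖fderiv ℝ (fun z => fderiv ℝ φ z) y‖ ≤ M₂)
    (x₀ x : EuclideanSpace ℝ (Fin d)) :
    |φ x - (φ x₀ + fderiv ℝ φ x₀ (x - x₀))| ≤ M₂ / 2 * ‖x - x₀‖ ^ 2 := by
  have hdiff : Differentiable ℝ φ := hφ.differentiable (by norm_num)
  have hd1 : ContDiff ℝ 1 (fun z => fderiv ℝ φ z) := hφ.fderiv_right (by norm_num)
  have hLip : ∀ y z : EuclideanSpace ℝ (Fin d),
      ‖fderiv ℝ φ y - fderiv ℝ φ z‖ ≤ M₂ * ‖y - z‖ := by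
    intro y z
    exact Convex.norm_image_sub_le_of_norm_fderiv_le
      (fun w _ => (hd1.differentiable (by norm_num) w)) (fun w _ => hM₂ w)
      convex_univ (Set.mem_univ z) (Set.mem_univ y)
  set v := x - x₀ with hv
  set c : ℝ := fderiv ℝ φ x₀ v with hc
  set g : ℝ → ℝ := fun t => φ (x₀ + t • v) - t * c - φ x₀ with hg
  have hg' : ∀ t : ℝ, HasDerivAt g (fderiv ℝ φ (x₀ + t • v) v - c) t := by
    intro t
    have hline : HasDerivAt (fun t : ℝ => x₀ + t • v) v t := by
      simpa using ((hasDerivAt_id t).smul_const v).const_add x₀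
    have h1 : HasDerivAt (fun t : ℝ => φ (x₀ + t • v)) (fderiv ℝ φ (x₀ + t • v) v) t :=
      (hdiff (x₀ + t • v)).hasFDerivAt.comp_hasDerivAt t hline
    rw [hg]
    simpa using (h1.sub (hasDerivAt_mul_const c)).sub_const (φ x₀)
  have key : ∀ u ∈ Set.Icc (0:ℝ) 1, ‖g u‖ ≤ M₂ * ‖v‖ ^ 2 / 2 * u ^ 2 := by
    refine image_norm_le_of_norm_deriv_right_le_deriv_boundary
      (f := g) (f' := fun t => fderiv ℝ φ (x₀ + t • v) v - c) (a := 0) (b := 1)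
      (B := fun t => M₂ * ‖v‖ ^ 2 / 2 * t ^ 2) (B' := fun t => M₂ * ‖v‖ ^ 2 * t)
      (fun t _ => (hg' t).continuousAt.continuousWithinAt)
      (fun t _ => (hg' t).hasDerivWithinAt.mono (Set.Ici_subset_Ici.mpr le_rfl)) ?_ ?_ ?_
    · simp [hg]
    · intro t
      have h2 := (hasDerivAt_pow 2 t).const_mul (M₂ * ‖v‖ ^ 2 / 2)
      refine h2.congr_deriv ?_
      rw [show (2:ℕ) - 1 = 1 from rfl]; push_cast; ring
    · intro t ht
      have h1 : ‖fderiv ℝ φ (x₀ + t • v) v - c‖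
          ≤ ‖fderiv ℝ φ (x₀ + t • v) - fderiv ℝ φ x₀‖ * ‖v‖ := by
        rw [hc]
        exact (fderiv ℝ φ (x₀ + t • v) - fderiv ℝ φ x₀).le_opNorm v
      have h2 : ‖fderiv ℝ φ (x₀ + t • v) - fderiv ℝ φ x₀‖ ≤ M₂ * (t * ‖v‖) := by
        have h3 := hLip (x₀ + t • v) x₀
        simpa [norm_smul, _root_.abs_of_nonneg ht.1] using h3
      have hv0 : (0:ℝ) ≤ ‖v‖ := norm_nonneg v
      calc ‖fderiv ℝ φ (x₀ + t • v) v - c‖ ≤ (M₂ * (t * ‖v‖)) * ‖v‖ :=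
            h1.trans (mul_le_mul_of_nonneg_right h2 hv0)
        _ = M₂ * ‖v‖ ^ 2 * t := by ring
  have h1 := key 1 (by norm_num)
  have hx : x₀ + v = x := by rw [hv]; abel
  rw [hg] at h1
  simp only [one_smul, one_mul, one_pow, mul_one, hx, Real.norm_eq_abs] at h1
  calc |φ x - (φ x₀ + fderiv ℝ φ x₀ (x - x₀))| = |φ x - c - φ x₀| := by rw [hc, hv]; ring_nf
    _ ≤ M₂ * ‖v‖ ^ 2 / 2 := h1
    _ = M₂ / 2 * ‖x - x₀‖ ^ 2 := by rw [hv]; ring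

/-- For a nonnegative partition of unity `{φⱼ}` on `Ω` subordinate to balls of radius `h`
centered at nodes `xⱼ`, for a phase `φ` with Hessian bounded by `M₂` and coefficients
`|aⱼ| ≤ M₀`, the difference between the oscillatory factor `e^{iωφ}` and its nodewise
linearizations `e^{iωℓⱼ}`, `ℓⱼ(x) = φ(xⱼ) + ⟨∇φ(xⱼ), x − xⱼ⟩`, weighted by the partition,
satisfies `|Σⱼ aⱼφⱼ(x)(e^{iωφ(x)} − e^{iωℓⱼ(x)})| ≤ ωh²M₂M₀/2` on `Ω`. -/
theorem stmt_4 {d : ℕ} (hd : 1 ≤ d) {ι : Type*} (J : Finset ι)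
    (Ω : Set (EuclideanSpace ℝ (Fin d))) (h : ℝ) (hh : 0 < h)
    (xj : ι → EuclideanSpace ℝ (Fin d))
    (φj : ι → EuclideanSpace ℝ (Fin d) → ℝ)
    (hφj : ∀ j ∈ J, ∀ x, 0 ≤ φj j x ∧ φj j x ≤ 1)
    (hsum : ∀ x ∈ Ω, ∑ j ∈ J, φj j x = 1)
    (hsupp : ∀ j ∈ J, ∀ x, h < ‖x - xj j‖ → φj j x = 0)
    (φ : EuclideanSpace ℝ (Fin d) → ℝ) (hφ : ContDiff ℝ 2 φ)
    (M₂ : ℝ) (hM₂ : ∀ y, ‖fderiv ℝ (fun z => fderiv ℝ φ z) y‖ ≤ M₂)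
    (a : ι → ℝ) (M₀ : ℝ) (ha : ∀ j ∈ J, |a j| ≤ M₀) :
    ∀ ω : ℝ, 0 < ω → ∀ x ∈ Ω,
      ‖∑ j ∈ J, (a j : ℂ) * (φj j x : ℂ) *
          (Complex.exp (Complex.I * (ω : ℂ) * (φ x : ℂ))
            - Complex.exp (Complex.I * (ω : ℂ)
                * ((φ (xj j) + ⟪gradient φ (xj j), x - xj j⟫_ℝ : ℝ) : ℂ)))‖
        ≤ ω * h ^ 2 * M₂ * M₀ / 2 := by
  intro ω hω x hx
  have hM₂0 : 0 ≤ M₂ := le_trans (norm_nonneg (fderiv ℝ (fun z => fderiv ℝ φ z) 0)) (hM₂ 0)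
  rcases J.eq_empty_or_nonempty with hJ | ⟨j₀, hj₀⟩
  · exact absurd (hsum x hx) (by simp [hJ])
  have hM₀ : 0 ≤ M₀ := (abs_nonneg _).trans (ha j₀ hj₀)
  set K : ℝ := ω * h ^ 2 * M₂ * M₀ / 2 with hK
  have hbound : ∀ j ∈ J,
      ‖(a j : ℂ) * (φj j x : ℂ) *
          (Complex.exp (Complex.I * (ω : ℂ) * (φ x : ℂ))
            - Complex.exp (Complex.I * (ω : ℂ)
                * ((φ (xj j) + ⟪gradient φ (xj j), x - xj j⟫_ℝ : ℝ) : ℂ)))‖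
        ≤ K * φj j x := by
    intro j hj
    set ℓ : ℝ := φ (xj j) + ⟪gradient φ (xj j), x - xj j⟫_ℝ with hℓ
    by_cases hfar : h < ‖x - xj j‖
    · rw [hsupp j hj x hfar]
      simp
    push_neg at hfar
    have hφ0 : 0 ≤ φj j x := (hφj j hj x).1
    have habsprod : ‖(a j : ℂ) * (φj j x : ℂ) *
        (Complex.exp (Complex.I * (ω : ℂ) * (φ x : ℂ))
          - Complex.exp (Complex.I * (ω : ℂ) * (ℓ : ℂ)))‖
        = |a j| * φj j x * ‖Complex.exp (Complex.I * (ω : ℂ) * (φ x : ℂ))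
          - Complex.exp (Complex.I * (ω : ℂ) * (ℓ : ℂ))‖ := by
      rw [norm_mul, norm_mul, Complex.norm_real, Complex.norm_real, Real.norm_eq_abs,
        Real.norm_eq_abs,
        _root_.abs_of_nonneg hφ0]
    rw [habsprod]
    have hexp : ‖Complex.exp (Complex.I * (ω : ℂ) * (φ x : ℂ))
        - Complex.exp (Complex.I * (ω : ℂ) * (ℓ : ℂ))‖ ≤ |ω * φ x - ω * ℓ| := by
      have := exp_I_lipschitz (ω * φ x) (ω * ℓ)
      convert this using 3 <;> push_cast <;> ring
    have hgrad : ⟪gradient φ (xj j), x - xj j⟫_ℝ = fderiv ℝ φ (xj j) (x - xj j) := by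
      rw [gradient]
      exact InnerProductSpace.toDual_symm_apply
    have htaylor : |φ x - ℓ| ≤ M₂ / 2 * ‖x - xj j‖ ^ 2 := by
      rw [hℓ, hgrad]
      exact taylor_bound φ hφ M₂ hM₂ (xj j) x
    have hE : ‖Complex.exp (Complex.I * (ω : ℂ) * (φ x : ℂ))
        - Complex.exp (Complex.I * (ω : ℂ) * (ℓ : ℂ))‖ ≤ ω * (M₂ / 2 * h ^ 2) := by
      refine hexp.trans ?_
      rw [← mul_sub, abs_mul, _root_.abs_of_pos hω]
      refine mul_le_mul_of_nonneg_left (htaylor.trans ?_) hω.le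
      have : ‖x - xj j‖ ^ 2 ≤ h ^ 2 := by
        have := norm_nonneg (x - xj j)
        nlinarith
      nlinarith
    have haj : |a j| ≤ M₀ := ha j hj
    have hE0 : (0:ℝ) ≤ ‖Complex.exp (Complex.I * (ω : ℂ) * (φ x : ℂ))
        - Complex.exp (Complex.I * (ω : ℂ) * (ℓ : ℂ))‖ := norm_nonneg _
    have haj0 : (0:ℝ) ≤ |a j| := abs_nonneg _
    rw [hK]
    nlinarith [mul_le_mul haj hE hE0 hM₀, mul_le_mul_of_nonneg_left
      (mul_le_mul haj hE hE0 hM₀) hφ0]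
  calc ‖∑ j ∈ J, (a j : ℂ) * (φj j x : ℂ) *
          (Complex.exp (Complex.I * (ω : ℂ) * (φ x : ℂ))
            - Complex.exp (Complex.I * (ω : ℂ)
                * ((φ (xj j) + ⟪gradient φ (xj j), x - xj j⟫_ℝ : ℝ) : ℂ)))‖
      ≤ ∑ j ∈ J, ‖(a j : ℂ) * (φj j x : ℂ) *
          (Complex.exp (Complex.I * (ω : ℂ) * (φ x : ℂ))
            - Complex.exp (Complex.I * (ω : ℂ)
                * ((φ (xj j) + ⟪gradient φ (xj j), x - xj j⟫_ℝ : ℝ) : ℂ)))‖ :=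
        norm_sum_le _ _
    _ ≤ ∑ j ∈ J, K * φj j x := Finset.sum_le_sum hbound
    _ = K * ∑ j ∈ J, φj j x := by rw [Finset.mul_sum]
    _ = K := by rw [hsum x hx, mul_one]
end

section
/- Let d ≥ 1 and let Ω ⊆ E = EuclideanSpace ℝ (Fin d) be measurable with finite Lebesgue measure |Ω|. Let h > 0, J a finite index set, nodes x_j ∈ E, and φ_j : E → ℝ with 0 ≤ φ_j(x) ≤ 1, Σ_{j∈J} φ_j(x) = 1 for every x ∈ Ω, and φ_j(x) = 0 whenever ‖x − x_j‖ > h. Let A : E → ℝ with |A(x_j)| ≤ M₀ for all j, and let φ : E → ℝ be twice continuously differentiable with ‖∇²φ(y)‖ ≤ M₂ for all y. Define u(x) := A(x)·exp(i ω φ(x)), ℓ_j(x) := φ(x_j) + ⟨∇φ(x_j), x − x_j⟩, and the ray interpolant u_I(x) := Σ_{j∈J} A(x_j) φ_j(x)·exp(i ω ℓ_j(x)). Then for every ω > 0, ‖u − u_I‖_{L²(Ω)} ≤ ‖A − Σ_{j∈J} A(x_j)φ_j‖_{L²(Ω)} + (ω h² M₂ M₀ / 2)·|Ω|^{1/2}.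 -/
open Complex MeasureTheory
open scoped InnerProductSpace BigOperators ENNReal NNReal

private lemma norm_cexp_I_mul (r : ℝ) : ‖Complex.exp (Complex.I * (r : ℂ))‖ = 1 := by
  rw [Complex.norm_exp]
  simp

private lemma norm_cexp_sub_cexp (a b : ℝ) :
    ‖Complex.exp (Complex.I * (a : ℂ)) - Complex.exp (Complex.I * (b : ℂ))‖ ≤ |a - b| := by
  have hd : ∀ t : ℝ, HasDerivAt (fun s : ℝ => Complex.exp (Complex.I * (s : ℂ)))
      (Complex.exp (Complex.I * (t : ℂ)) * Complex.I) t := by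
    intro t
    have h1 : HasDerivAt (fun s : ℝ => Complex.I * (s : ℂ)) Complex.I t := by
      simpa using (Complex.ofRealCLM.hasDerivAt (x := t)).const_mul Complex.I
    simpa using h1.cexp
  have h := Convex.norm_image_sub_le_of_norm_hasDerivWithin_le
      (f := fun s : ℝ => Complex.exp (Complex.I * (s : ℂ)))
      (f' := fun t => Complex.exp (Complex.I * (t : ℂ)) * Complex.I) (C := 1)
      (fun t _ => (hd t).hasDerivWithinAt)
      (fun t _ => by
        rw [norm_mul, norm_cexp_I_mul, Complex.norm_I, mul_one])
      convex_univ (Set.mem_univ b) (Set.mem_univ a)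
  simpa [Real.norm_eq_abs] using h

private lemma taylor_two_bound {d : ℕ} (φ : EuclideanSpace ℝ (Fin d) → ℝ) (hφ : ContDiff ℝ 2 φ)
    (M₂ : ℝ) (hM₂ : ∀ y, ‖fderiv ℝ (fun z => fderiv ℝ φ z) y‖ ≤ M₂)
    (p x : EuclideanSpace ℝ (Fin d)) :
    |φ x - φ p - fderiv ℝ φ p (x - p)| ≤ M₂ / 2 * ‖x - p‖ ^ 2 := by
  set v := x - p with hv
  have hφ1 : ContDiff ℝ 1 (fun z => fderiv ℝ φ z) := hφ.fderiv_right (by norm_num)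
  have hφd : Differentiable ℝ φ := hφ.differentiable (by norm_num)
  have lipf : ∀ z, ‖fderiv ℝ φ z - fderiv ℝ φ p‖ ≤ M₂ * ‖z - p‖ := fun z =>
    convex_univ.norm_image_sub_le_of_norm_fderiv_le
      (fun y _ => (hφ1.differentiable (by norm_num)).differentiableAt)
      (fun y _ => hM₂ y) (Set.mem_univ p) (Set.mem_univ z)
  have hline : ∀ t : ℝ, HasDerivAt (fun t : ℝ => p + t • v) v t := fun t => by
    simpa using ((hasDerivAt_id t).smul_const v).const_add p
  set g' : ℝ → ℝ := fun t => fderiv ℝ φ (p + t • v) v - fderiv ℝ φ p v with hg'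
  have hG : ∀ t : ℝ, HasDerivAt (fun t : ℝ => φ (p + t • v) - t * fderiv ℝ φ p v) (g' t) t := by
    intro t
    have h1 : HasDerivAt (fun t : ℝ => φ (p + t • v)) (fderiv ℝ φ (p + t • v) v) t :=
      (hφd (p + t • v)).hasFDerivAt.comp_hasDerivAt t (hline t)
    simpa [hg'] using h1.fun_sub ((hasDerivAt_id t).mul_const (fderiv ℝ φ p v))
  have hg'cont : Continuous g' := by
    have hc1 : Continuous fun t : ℝ => fderiv ℝ φ (p + t • v) :=
      (hφ1.continuous).comp (continuous_const.add (continuous_id.smul continuous_const))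
    exact (hc1.clm_apply continuous_const).sub continuous_const
  have hbound : ∀ t ∈ Set.Icc (0:ℝ) 1, ‖g' t‖ ≤ M₂ * ‖v‖ ^ 2 * t := by
    intro t ht
    have h1 : g' t = (fderiv ℝ φ (p + t • v) - fderiv ℝ φ p) v := by
      simp [hg', ContinuousLinearMap.sub_apply]
    rw [h1]
    calc ‖(fderiv ℝ φ (p + t • v) - fderiv ℝ φ p) v‖
        ≤ ‖fderiv ℝ φ (p + t • v) - fderiv ℝ φ p‖ * ‖v‖ :=
          ContinuousLinearMap.le_opNorm _ _
      _ ≤ M₂ * ‖p + t • v - p‖ * ‖v‖ := by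
          have := lipf (p + t • v)
          gcongr
      _ = M₂ * ‖v‖ ^ 2 * t := by
          rw [add_sub_cancel_left, norm_smul, Real.norm_eq_abs, _root_.abs_of_nonneg ht.1]
          ring
  have hint : IntervalIntegrable g' volume 0 1 := hg'cont.intervalIntegrable 0 1
  have ftc := intervalIntegral.integral_eq_sub_of_hasDerivAt (f := fun t : ℝ =>
      φ (p + t • v) - t * fderiv ℝ φ p v) (f' := g') (fun t _ => hG t) hint
  have hval : φ x - φ p - fderiv ℝ φ p v = ∫ t in (0:ℝ)..1, g' t := by
    rw [ftc]
    simp only [one_smul, zero_smul, add_zero, zero_mul, sub_zero, one_mul, hv,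
      add_sub_cancel]
    ring
  rw [hval]
  calc |∫ t in (0:ℝ)..1, g' t| ≤ ∫ t in (0:ℝ)..1, ‖g' t‖ := by
        simpa [Real.norm_eq_abs] using
          intervalIntegral.norm_integral_le_integral_norm (f := g') (a := 0) (b := 1)
          zero_le_one
    _ ≤ ∫ t in (0:ℝ)..1, M₂ * ‖v‖ ^ 2 * t := by
        apply intervalIntegral.integral_mono_on (by norm_num) hint.norm
        · exact ((continuous_const.mul continuous_id).intervalIntegrable 0 1)
        · exact hbound
    _ = M₂ / 2 * ‖v‖ ^ 2 := by
        rw [intervalIntegral.integral_const_mul, integral_id]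
        ring

private lemma lintegral_sq_add_const {α : Type*} [MeasurableSpace α] (μ : Measure α)
    (a : α → ℝ≥0∞) (k : ℝ≥0∞) :
    (∫⁻ x, (a x + k) ^ (2:ℝ) ∂μ) ^ (1/2:ℝ)
      ≤ (∫⁻ x, a x ^ (2:ℝ) ∂μ) ^ (1/2:ℝ) + k * μ Set.univ ^ (1/2:ℝ) := by
  set R := (∫⁻ x, a x ^ (2:ℝ) ∂μ) ^ (1/2:ℝ) + k * μ Set.univ ^ (1/2:ℝ) with hR
  have key : ∫⁻ x, (a x + k) ^ (2:ℝ) ∂μ ≤ R ^ (2:ℝ) := by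
    rw [MeasureTheory.lintegral_def]
    refine iSup₂_le fun ψ hψ => ?_
    have hmmeas : Measurable fun x => ψ x ^ (1/2:ℝ) :=
      ENNReal.continuous_rpow_const.measurable.comp ψ.measurable
    set m : α → ℝ≥0∞ := fun x => ψ x ^ (1/2:ℝ) with hm
    have hmle : ∀ x, m x ≤ a x + k := by
      intro x
      have h1 : ψ x ^ (1/2:ℝ) ≤ ((a x + k) ^ (2:ℝ)) ^ (1/2:ℝ) :=
        ENNReal.rpow_le_rpow (hψ x) (by norm_num)
      rwa [← ENNReal.rpow_mul, show (2:ℝ) * (1/2:ℝ) = 1 by norm_num, ENNReal.rpow_one] at h1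
    have hψm : ∀ x, ψ x = m x ^ (2:ℝ) := by
      intro x
      show ψ x = (ψ x ^ (1/2:ℝ)) ^ (2:ℝ)
      rw [← ENNReal.rpow_mul]
      norm_num
    have h0 : ψ.lintegral μ = ∫⁻ x, m x ^ (2:ℝ) ∂μ := by
      rw [← MeasureTheory.SimpleFunc.lintegral_eq_lintegral]
      exact lintegral_congr fun x => hψm x
    have mink := ENNReal.lintegral_Lp_add_le
        (f := fun x => m x - k) (g := fun x => min (m x) k) (μ := μ)
        (hmmeas.sub measurable_const).aemeasurable
        (hmmeas.min measurable_const).aemeasurable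
        (by norm_num : (1:ℝ) ≤ 2)
    have hfg : ∀ x, ((fun x => m x - k) + fun x => min (m x) k) x = m x := fun x => by
      simp only [Pi.add_apply]
      exact tsub_add_min
    rw [lintegral_congr fun x => by rw [hfg x]] at mink
    have hA : (∫⁻ x, (m x - k) ^ (2:ℝ) ∂μ) ^ ((1:ℝ)/2) ≤ (∫⁻ x, a x ^ (2:ℝ) ∂μ) ^ (1/2:ℝ) :=
      ENNReal.rpow_le_rpow
        (lintegral_mono fun x =>
          ENNReal.rpow_le_rpow (tsub_le_iff_right.mpr (hmle x)) (by norm_num))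
        (by norm_num)
    have hB : (∫⁻ x, (min (m x) k) ^ (2:ℝ) ∂μ) ^ ((1:ℝ)/2) ≤ k * μ Set.univ ^ (1/2:ℝ) := by
      have h1 : ∫⁻ x, (min (m x) k) ^ (2:ℝ) ∂μ ≤ ∫⁻ _, k ^ (2:ℝ) ∂μ :=
        lintegral_mono fun x => ENNReal.rpow_le_rpow (min_le_right _ _) (by norm_num)
      rw [lintegral_const] at h1
      calc (∫⁻ x, (min (m x) k) ^ (2:ℝ) ∂μ) ^ ((1:ℝ)/2)
          ≤ (k ^ (2:ℝ) * μ Set.univ) ^ ((1:ℝ)/2) := ENNReal.rpow_le_rpow h1 (by norm_num)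
        _ = k * μ Set.univ ^ (1/2:ℝ) := by
            rw [ENNReal.mul_rpow_of_nonneg _ _ (by norm_num : (0:ℝ) ≤ 1/2),
              ← ENNReal.rpow_mul]
            norm_num
    have hfin : (ψ.lintegral μ) ^ ((1:ℝ)/2) ≤ R := by
      rw [h0]
      exact le_trans mink (add_le_add hA hB)
    calc ψ.lintegral μ = ((ψ.lintegral μ) ^ ((1:ℝ)/2)) ^ (2:ℝ) := by
          rw [← ENNReal.rpow_mul]; norm_num
      _ ≤ R ^ (2:ℝ) := ENNReal.rpow_le_rpow hfin (by norm_num)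
  calc (∫⁻ x, (a x + k) ^ (2:ℝ) ∂μ) ^ (1/2:ℝ)
      ≤ (R ^ (2:ℝ)) ^ (1/2:ℝ) := ENNReal.rpow_le_rpow key (by norm_num)
    _ = R := by rw [← ENNReal.rpow_mul]; norm_num

private lemma eLpNorm_norm_add_const {α : Type*} [MeasurableSpace α] (μ : Measure α)
    (v : α → ℝ) (c : ℝ) (hc : 0 ≤ c) :
    eLpNorm (fun x => ‖v x‖ + c) 2 μ
      ≤ eLpNorm v 2 μ + ENNReal.ofReal c * μ Set.univ ^ (1/2:ℝ) := by
  rw [eLpNorm_eq_lintegral_rpow_enorm_toReal (by norm_num) (by norm_num),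
      eLpNorm_eq_lintegral_rpow_enorm_toReal (by norm_num) (by norm_num)]
  simp only [ENNReal.toReal_ofNat]
  have h1 : ∀ x, ((‖‖v x‖ + c‖₊ : ℝ≥0) : ℝ≥0∞) = (‖v x‖₊ : ℝ≥0∞) + ENNReal.ofReal c := by
    intro x
    rw [← enorm_eq_nnnorm, ← enorm_eq_nnnorm, ← ofReal_norm, ← ofReal_norm,
      Real.norm_of_nonneg (add_nonneg (norm_nonneg _) hc),
      ENNReal.ofReal_add (norm_nonneg _) hc]
  calc (∫⁻ x, ((‖‖v x‖ + c‖₊ : ℝ≥0) : ℝ≥0∞) ^ (2:ℝ) ∂μ) ^ (1/(2:ℝ))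
      = (∫⁻ x, ((‖v x‖₊ : ℝ≥0∞) + ENNReal.ofReal c) ^ (2:ℝ) ∂μ) ^ (1/(2:ℝ)) := by
        rw [lintegral_congr fun x => by rw [h1 x]]
    _ ≤ (∫⁻ x, ((‖v x‖₊ : ℝ≥0∞)) ^ (2:ℝ) ∂μ) ^ (1/2:ℝ) + ENNReal.ofReal c * μ Set.univ ^ (1/2:ℝ) :=
        lintegral_sq_add_const μ _ _

/-- `L²(Ω)` error of the ray-FEM nodal interpolant with exact ray directions:
for `u = A e^{iωφ}` and `u_I = Σⱼ A(xⱼ)φⱼ e^{iωℓⱼ}` built on a nonnegative partition of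
unity subordinate to balls of radius `h`, one has
`‖u − u_I‖_{L²(Ω)} ≤ ‖A − Σⱼ A(xⱼ)φⱼ‖_{L²(Ω)} + (ωh²M₂M₀/2)|Ω|^{1/2}`. -/
theorem stmt_5 {d : ℕ} (hd : 1 ≤ d) {ι : Type*} (J : Finset ι)
    (Ω : Set (EuclideanSpace ℝ (Fin d)))
    (hΩmeas : MeasurableSet Ω) (hΩfin : volume Ω < ⊤)
    (h : ℝ) (hh : 0 < h)
    (xj : ι → EuclideanSpace ℝ (Fin d))
    (φj : ι → EuclideanSpace ℝ (Fin d) → ℝ)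
    (hφj : ∀ j ∈ J, ∀ x, 0 ≤ φj j x ∧ φj j x ≤ 1)
    (hsum : ∀ x ∈ Ω, ∑ j ∈ J, φj j x = 1)
    (hsupp : ∀ j ∈ J, ∀ x, h < ‖x - xj j‖ → φj j x = 0)
    (A : EuclideanSpace ℝ (Fin d) → ℝ)
    (M₀ : ℝ) (hM₀ : ∀ j ∈ J, |A (xj j)| ≤ M₀)
    (φ : EuclideanSpace ℝ (Fin d) → ℝ) (hφ : ContDiff ℝ 2 φ)
    (M₂ : ℝ) (hM₂ : ∀ y, ‖fderiv ℝ (fun z => fderiv ℝ φ z) y‖ ≤ M₂) :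
    ∀ ω : ℝ, 0 < ω →
      eLpNorm (fun x => (A x : ℂ) * Complex.exp (Complex.I * (ω : ℂ) * (φ x : ℂ))
          - ∑ j ∈ J, (A (xj j) : ℂ) * (φj j x : ℂ)
              * Complex.exp (Complex.I * (ω : ℂ)
                  * ((φ (xj j) + ⟪gradient φ (xj j), x - xj j⟫_ℝ : ℝ) : ℂ)))
        2 (volume.restrict Ω)
      ≤ eLpNorm (fun x => A x - ∑ j ∈ J, A (xj j) * φj j x) 2 (volume.restrict Ω)
        + ENNReal.ofReal (ω * h ^ 2 * M₂ * M₀ / 2 * Real.sqrt (volume Ω).toReal) := by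
  intro ω hω
  have hexpnorm : ∀ r : ℝ, ‖Complex.exp (Complex.I * (ω:ℂ) * (r:ℂ))‖ = 1 := fun r => by
    rw [mul_assoc, ← Complex.ofReal_mul]; exact norm_cexp_I_mul _
  rcases J.eq_empty_or_nonempty with rfl | hJ
  · simp only [Finset.sum_empty, sub_zero]
    refine le_trans (eLpNorm_mono fun x => ?_) le_self_add
    rw [norm_mul, hexpnorm, mul_one, Complex.norm_real]
  -- nonempty case
  have hM₂0 : 0 ≤ M₂ := le_trans (ContinuousLinearMap.opNorm_nonneg _) (hM₂ 0)
  obtain ⟨j₀, hj₀⟩ := hJ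
  have hM₀0 : 0 ≤ M₀ := le_trans (abs_nonneg _) (hM₀ j₀ hj₀)
  set B : ℝ := ω * h ^ 2 * M₂ * M₀ / 2 with hB
  have hB0 : 0 ≤ B := by positivity
  set s : EuclideanSpace ℝ (Fin d) → ℝ := fun x => ∑ j ∈ J, A (xj j) * φj j x with hs
  have hexpdiff : ∀ a b : ℝ,
      ‖Complex.exp (Complex.I * (ω:ℂ) * (a:ℂ)) - Complex.exp (Complex.I * (ω:ℂ) * (b:ℂ))‖
        ≤ ω * |a - b| := by
    intro a b
    rw [mul_assoc, ← Complex.ofReal_mul, mul_assoc (Complex.I), ← Complex.ofReal_mul]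
    refine (norm_cexp_sub_cexp _ _).trans ?_
    rw [← mul_sub, abs_mul, abs_of_pos hω]
  have pointwise : ∀ x ∈ Ω,
      ‖(A x : ℂ) * Complex.exp (Complex.I * (ω : ℂ) * (φ x : ℂ))
          - ∑ j ∈ J, (A (xj j) : ℂ) * (φj j x : ℂ)
              * Complex.exp (Complex.I * (ω : ℂ)
                  * ((φ (xj j) + ⟪gradient φ (xj j), x - xj j⟫_ℝ : ℝ) : ℂ))‖
        ≤ ‖A x - s x‖ + B := by
    intro x hx
    set E₀ : ℂ := Complex.exp (Complex.I * (ω : ℂ) * (φ x : ℂ)) with hE₀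
    have hdecomp : (A x : ℂ) * E₀
          - ∑ j ∈ J, (A (xj j) : ℂ) * (φj j x : ℂ)
              * Complex.exp (Complex.I * (ω : ℂ)
                  * ((φ (xj j) + ⟪gradient φ (xj j), x - xj j⟫_ℝ : ℝ) : ℂ))
        = ((A x - s x : ℝ) : ℂ) * E₀
          + ∑ j ∈ J, (A (xj j) : ℂ) * (φj j x : ℂ)
              * (E₀ - Complex.exp (Complex.I * (ω : ℂ)
                  * ((φ (xj j) + ⟪gradient φ (xj j), x - xj j⟫_ℝ : ℝ) : ℂ))) := by
      rw [hs]
      push_cast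
      simp only [mul_sub, Finset.sum_sub_distrib, ← Finset.sum_mul]
      ring
    rw [hdecomp]
    refine (norm_add_le _ _).trans ?_
    have h1 : ‖((A x - s x : ℝ) : ℂ) * E₀‖ = ‖A x - s x‖ := by
      rw [norm_mul, hE₀, hexpnorm, mul_one, Complex.norm_real]
    rw [h1]
    refine add_le_add_right ?_ _
    refine (norm_sum_le _ _).trans ?_
    have termbound : ∀ j ∈ J,
        ‖(A (xj j) : ℂ) * (φj j x : ℂ)
            * (E₀ - Complex.exp (Complex.I * (ω : ℂ)
                * ((φ (xj j) + ⟪gradient φ (xj j), x - xj j⟫_ℝ : ℝ) : ℂ)))‖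
          ≤ B * φj j x := by
      intro j hj
      rcases eq_or_ne (φj j x) 0 with h0 | h0
      · simp [h0]
      have hxj : ‖x - xj j‖ ≤ h := not_lt.1 fun hlt => h0 (hsupp j hj x hlt)
      have hφj0 := (hφj j hj x).1
      have hgrad : ⟪gradient φ (xj j), x - xj j⟫_ℝ = fderiv ℝ φ (xj j) (x - xj j) := by
        rw [gradient]
        exact InnerProductSpace.toDual_symm_apply
      have hexp : ‖E₀ - Complex.exp (Complex.I * (ω : ℂ)
          * ((φ (xj j) + ⟪gradient φ (xj j), x - xj j⟫_ℝ : ℝ) : ℂ))‖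
          ≤ ω * (M₂ / 2 * h ^ 2) := by
        refine (hexpdiff _ _).trans ?_
        have habs : |φ x - (φ (xj j) + ⟪gradient φ (xj j), x - xj j⟫_ℝ)|
            ≤ M₂ / 2 * h ^ 2 := by
          rw [sub_add_eq_sub_sub, hgrad]
          refine (taylor_two_bound φ hφ M₂ hM₂ (xj j) x).trans ?_
          have : ‖x - xj j‖ ^ 2 ≤ h ^ 2 := pow_le_pow_left₀ (norm_nonneg _) hxj 2
          nlinarith
        exact mul_le_mul_of_nonneg_left habs hω.le
      calc ‖(A (xj j) : ℂ) * (φj j x : ℂ)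
            * (E₀ - Complex.exp (Complex.I * (ω : ℂ)
                * ((φ (xj j) + ⟪gradient φ (xj j), x - xj j⟫_ℝ : ℝ) : ℂ)))‖
          = |A (xj j)| * φj j x * ‖E₀ - Complex.exp (Complex.I * (ω : ℂ)
                * ((φ (xj j) + ⟪gradient φ (xj j), x - xj j⟫_ℝ : ℝ) : ℂ))‖ := by
            rw [norm_mul, norm_mul, Complex.norm_real, Complex.norm_real,
              Real.norm_eq_abs, Real.norm_eq_abs, _root_.abs_of_nonneg hφj0]
        _ ≤ M₀ * φj j x * (ω * (M₂ / 2 * h ^ 2)) := by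
            refine mul_le_mul (mul_le_mul_of_nonneg_right (hM₀ j hj) hφj0) hexp
              (norm_nonneg _) (by positivity)
        _ = B * φj j x := by rw [hB]; ring
    refine (Finset.sum_le_sum termbound).trans ?_
    rw [← Finset.mul_sum, hsum x hx, mul_one]
  -- assemble
  calc eLpNorm (fun x => (A x : ℂ) * Complex.exp (Complex.I * (ω : ℂ) * (φ x : ℂ))
          - ∑ j ∈ J, (A (xj j) : ℂ) * (φj j x : ℂ)
              * Complex.exp (Complex.I * (ω : ℂ)
                  * ((φ (xj j) + ⟪gradient φ (xj j), x - xj j⟫_ℝ : ℝ) : ℂ)))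
        2 (volume.restrict Ω)
      ≤ eLpNorm (fun x => ‖A x - s x‖ + B) 2 (volume.restrict Ω) := by
        refine eLpNorm_mono_ae ?_
        filter_upwards [ae_restrict_mem hΩmeas] with x hx
        rw [Real.norm_of_nonneg (add_nonneg (norm_nonneg _) hB0)]
        exact pointwise x hx
    _ ≤ eLpNorm (fun x => A x - s x) 2 (volume.restrict Ω)
          + ENNReal.ofReal B * (volume.restrict Ω) Set.univ ^ (1/2:ℝ) :=
        eLpNorm_norm_add_const _ _ _ hB0
    _ ≤ eLpNorm (fun x => A x - ∑ j ∈ J, A (xj j) * φj j x) 2 (volume.restrict Ω)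
        + ENNReal.ofReal (ω * h ^ 2 * M₂ * M₀ / 2 * Real.sqrt (volume Ω).toReal) := by
        rw [Measure.restrict_apply_univ]
        have hvol : (volume Ω) ^ (1/2:ℝ) = ENNReal.ofReal (Real.sqrt (volume Ω).toReal) := by
          conv_lhs => rw [← ENNReal.ofReal_toReal hΩfin.ne]
          rw [ENNReal.ofReal_rpow_of_nonneg ENNReal.toReal_nonneg (by norm_num : (0:ℝ) ≤ 1/2),
            ← Real.sqrt_eq_rpow]
        rw [hvol, ← ENNReal.ofReal_mul hB0]
end

section
/- In the setting of the previous result (measurable Ω with finite measure |Ω|; nonnegative partition of unity {φ_j} on Ω subordinate to balls of radius h at nodes x_j; |A(x_j)| ≤ M₀; ‖∇²φ‖ ≤ M₂ everywhere; u = A e^{iωφ}; u_I = Σ_j A(x_j)φ_j e^{iωℓ_j} with ℓ_j(x) = φ(x_j) + ⟨∇φ(x_j), x − x_j⟩), assume additionally that ‖A − Σ_{j∈J} A(x_j)φ_j‖_{L²(Ω)} ≤ C_A h², that ω ≥ 1, and that h ≤ 1/ω. Then ‖u − u_I‖_{L²(Ω)} ≤ (C_A + M₂ M₀ |Ω|^{1/2}/2)·ω^{-1}.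 -/
open Complex MeasureTheory
open scoped InnerProductSpace BigOperators ENNReal NNReal

lemma stmt6_amgm (x t : ℝ≥0∞) (ht0 : t ≠ 0) (htop : t ≠ ⊤) : 2 * x ≤ x ^ 2 / t + t := by
  rcases eq_or_ne x ⊤ with rfl | hx
  · simp [ENNReal.top_pow, ENNReal.top_div_of_ne_top htop]
  lift x to NNReal using hx
  lift t to NNReal using htop
  have ht0' : (t : NNReal) ≠ 0 := by exact_mod_cast ht0
  rw [← ENNReal.coe_pow, ← ENNReal.coe_div ht0', ← ENNReal.coe_add]
  rw [show ((2:ℝ≥0∞) * x) = ((2 * x : NNReal) : ℝ≥0∞) by push_cast; ring]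
  rw [ENNReal.coe_le_coe, ← NNReal.coe_le_coe]
  push_cast
  have htpos : (0:ℝ) < t := lt_of_le_of_ne (t.coe_nonneg) (by exact_mod_cast ht0'.symm)
  rw [div_add' _ _ _ (ne_of_gt htpos), le_div_iff₀ htpos]
  nlinarith [sq_nonneg ((x:ℝ) - t)]

lemma stmt6_mink {α : Type*} [MeasurableSpace α] (μ : Measure α) (g : α → ℝ≥0∞) (c : ℝ≥0∞)
    (hc : c ≠ ⊤) (hV0 : μ Set.univ ≠ 0) (hVtop : μ Set.univ ≠ ⊤) :
    (∫⁻ x, (g x + c) ^ 2 ∂μ) ^ (1/2 : ℝ)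
      ≤ (∫⁻ x, g x ^ 2 ∂μ) ^ (1/2 : ℝ) + c * (μ Set.univ) ^ (1/2 : ℝ) := by
  set V := μ Set.univ with hV
  set s := V ^ (1/2 : ℝ) with hs
  have hs0 : s ≠ 0 := by
    simp [hs, ENNReal.rpow_eq_zero_iff, hV0, hVtop]
  have hstop : s ≠ ⊤ := by
    simp [hs, ENNReal.rpow_eq_top_iff, hV0, hVtop]
  have hss : s * s = V := by
    rw [hs, ← ENNReal.rpow_add _ _ hV0 hVtop]
    norm_num
  set G := ∫⁻ x, g x ^ 2 ∂μ with hG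
  rcases eq_or_ne G ⊤ with hGtop | hGtop
  · rw [hGtop]
    simp [ENNReal.rpow_eq_top_iff]
  set B := G ^ (1/2 : ℝ) with hB
  have hBtop : B ≠ ⊤ := by
    simp [hB, ENNReal.rpow_eq_top_iff, hGtop]
  have hBB : B * B = G := by
    rw [hB, ← ENNReal.rpow_add_of_nonneg _ _ (by norm_num) (by norm_num)]
    norm_num
  apply ENNReal.le_of_forall_pos_le_add
  intro ε hε hfin
  set η := (ε:ℝ≥0∞) ^ 2 / (c * s + 1) with hη
  have hcs1top : c * s + 1 ≠ ⊤ := by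
    simp [ENNReal.add_ne_top, ENNReal.mul_ne_top hc hstop]
  have hη0 : η ≠ 0 := by
    rw [hη]
    simp only [ne_eq, ENNReal.div_eq_zero_iff, not_or, pow_eq_zero_iff, OfNat.ofNat_ne_zero,
      not_false_eq_true, and_true]
    exact ⟨by exact_mod_cast hε.ne', hcs1top⟩
  have hηtop : η ≠ ⊤ := (ENNReal.div_lt_top (by simp) (by simp)).ne
  have hηs : c * η * s ≤ (ε:ℝ≥0∞) ^ 2 := by
    rw [hη, mul_comm c _, mul_assoc]
    calc (ε:ℝ≥0∞)^2 / (c*s+1) * (c*s) ≤ (ε:ℝ≥0∞)^2 / (c*s+1) * (c*s+1) := by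
          gcongr; exact le_self_add
      _ = (c*s+1) * ((ε:ℝ≥0∞)^2 / (c*s+1)) := mul_comm _ _
      _ ≤ (ε:ℝ≥0∞)^2 := ENNReal.mul_div_le
  set t := (B + η) / s with ht
  have hBη0 : B + η ≠ 0 := fun hcon => hη0 (add_eq_zero.mp hcon).2
  have hBηtop : B + η ≠ ⊤ := ENNReal.add_ne_top.mpr ⟨hBtop, hηtop⟩
  have ht0 : t ≠ 0 := by
    rw [ht]
    simp [ENNReal.div_eq_zero_iff, hstop, hBη0]
  have httop : t ≠ ⊤ := by
    rw [ht]
    simp only [ne_eq, ENNReal.div_eq_top, not_or, not_and]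
    exact ⟨fun _ => hs0, fun hcon => absurd hcon hBηtop⟩
  have hctop : c / t ≠ ⊤ := (ENNReal.div_lt_top hc ht0).ne
  have hpt : ∀ x, (g x + c) ^ 2 ≤ (c * t + c ^ 2) + (1 + c / t) * g x ^ 2 := by
    intro x
    have expand : (g x + c) ^ 2 = g x ^ 2 + c * (2 * g x) + c ^ 2 := by ring
    rw [expand]
    have h2 : c * (2 * g x) ≤ c * (g x ^ 2 / t + t) :=
      mul_le_mul_right (stmt6_amgm (g x) t ht0 httop) c
    calc g x ^ 2 + c * (2 * g x) + c ^ 2 ≤ g x ^ 2 + c * (g x ^ 2 / t + t) + c ^ 2 := by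
          gcongr
      _ = (c * t + c ^ 2) + (1 + c / t) * g x ^ 2 := by
          rw [div_eq_mul_inv, div_eq_mul_inv]; ring
  have hint : (∫⁻ x, (g x + c) ^ 2 ∂μ) ≤ (c * t + c ^ 2) * V + (1 + c / t) * G := by
    calc (∫⁻ x, (g x + c) ^ 2 ∂μ) ≤ ∫⁻ x, ((c * t + c ^ 2) + (1 + c / t) * g x ^ 2) ∂μ :=
          lintegral_mono hpt
      _ = (c * t + c ^ 2) * V + (1 + c / t) * G := by
          rw [lintegral_add_left measurable_const, lintegral_const,
            lintegral_const_mul' _ _ (by simp [ENNReal.add_ne_top, hctop])]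
  have htV : t * V = (B + η) * s := by
    rw [ht, ← hss, ← mul_assoc, ENNReal.div_mul_cancel hs0 hstop]
  have hBst : B * s * t = B * (B + η) := by
    rw [ht, mul_assoc, mul_comm s, ENNReal.div_mul_cancel hs0 hstop]
  have hGt : G / t ≤ B * s := by
    rw [ENNReal.div_le_iff ht0 httop, hBst, ← hBB]
    gcongr
    exact le_self_add
  have hct : (c / t) * G ≤ c * (B * s) := by
    calc (c / t) * G = c * (G / t) := by rw [div_eq_mul_inv, div_eq_mul_inv]; ring
      _ ≤ c * (B * s) := mul_le_mul_right hGt c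
  have key : (c * t + c ^ 2) * V + (1 + c / t) * G ≤ (B + c * s) ^ 2 + (ε:ℝ≥0∞) ^ 2 := by
    calc (c * t + c ^ 2) * V + (1 + c / t) * G
        = c * (t * V) + c ^ 2 * V + (G + (c / t) * G) := by ring
      _ ≤ c * ((B + η) * s) + c ^ 2 * (s * s) + (B * B + c * (B * s)) := by
          rw [htV, hss, hBB]
          gcongr
      _ = ((B + c * s) ^ 2) + c * η * s := by ring
      _ ≤ (B + c * s) ^ 2 + (ε:ℝ≥0∞) ^ 2 := by gcongr
  calc (∫⁻ x, (g x + c) ^ 2 ∂μ) ^ (1/2 : ℝ)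
      ≤ ((B + c * s) ^ 2 + (ε:ℝ≥0∞) ^ 2) ^ (1/2 : ℝ) :=
        ENNReal.rpow_le_rpow (hint.trans key) (by norm_num)
    _ ≤ ((B + c * s + ε) ^ 2) ^ (1/2 : ℝ) := by
        apply ENNReal.rpow_le_rpow _ (by norm_num)
        calc (B + c * s) ^ 2 + (ε:ℝ≥0∞) ^ 2
            ≤ (B + c * s) ^ 2 + (2 * (B + c * s) * ε + (ε:ℝ≥0∞) ^ 2) :=
              add_le_add_right le_add_self _
          _ = (B + c * s + ε) ^ 2 := by ring
    _ = B + c * s + ε := by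
        rw [← ENNReal.rpow_natCast (B + c * s + (ε:ℝ≥0∞)) 2, ← ENNReal.rpow_mul]
        norm_num

lemma stmt6_taylor {d : ℕ} (φ : EuclideanSpace ℝ (Fin d) → ℝ) (hφ : ContDiff ℝ 2 φ) (M₂ : ℝ)
    (hM₂ : ∀ y, ‖fderiv ℝ (fun z => fderiv ℝ φ z) y‖ ≤ M₂) (x₀ x : EuclideanSpace ℝ (Fin d)) :
    |φ x - φ x₀ - fderiv ℝ φ x₀ (x - x₀)| ≤ M₂ / 2 * ‖x - x₀‖ ^ 2 := by
  set v := x - x₀ with hv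
  have hd1 : Differentiable ℝ φ := hφ.differentiable (by norm_num)
  have hd2 : Differentiable ℝ (fun z => fderiv ℝ φ z) :=
    (hφ.fderiv_right (m := 1) (by norm_num)).differentiable (by norm_num)
  have lip : ∀ y, ‖fderiv ℝ φ y - fderiv ℝ φ x₀‖ ≤ M₂ * ‖y - x₀‖ := fun y =>
    convex_univ.norm_image_sub_le_of_norm_fderiv_le (fun z _ => hd2 z)
      (fun z _ => hM₂ z) (Set.mem_univ x₀) (Set.mem_univ y)
  set g : ℝ → ℝ := fun t => φ (x₀ + t • v) - t * (fderiv ℝ φ x₀ v) - φ x₀ with hg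
  have line : ∀ t : ℝ, HasDerivAt (fun s : ℝ => x₀ + s • v) v t := by
    intro t
    simpa using ((hasDerivAt_id t).smul_const v).const_add x₀
  have hg' : ∀ t : ℝ, HasDerivAt g (fderiv ℝ φ (x₀ + t • v) v - fderiv ℝ φ x₀ v) t := by
    intro t
    have := (((hd1 _).hasFDerivAt.comp_hasDerivAt t (line t)).sub
      ((hasDerivAt_id t).mul_const (fderiv ℝ φ x₀ v))).sub_const (φ x₀)
    simpa [Function.comp, hg] using this
  have bound : ∀ t ∈ Set.Ico (0:ℝ) 1,
      ‖fderiv ℝ φ (x₀ + t • v) v - fderiv ℝ φ x₀ v‖ ≤ (M₂ * ‖v‖ ^ 2) * t := by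
    intro t ht
    have h1 : ‖fderiv ℝ φ (x₀ + t • v) - fderiv ℝ φ x₀‖ ≤ M₂ * (t * ‖v‖) := by
      have := lip (x₀ + t • v)
      simpa [norm_smul, _root_.abs_of_nonneg ht.1] using this
    calc ‖fderiv ℝ φ (x₀ + t • v) v - fderiv ℝ φ x₀ v‖
        = ‖(fderiv ℝ φ (x₀ + t • v) - fderiv ℝ φ x₀) v‖ := by simp
      _ ≤ ‖fderiv ℝ φ (x₀ + t • v) - fderiv ℝ φ x₀‖ * ‖v‖ :=
          ContinuousLinearMap.le_opNorm _ _
      _ ≤ M₂ * (t * ‖v‖) * ‖v‖ := by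
          apply mul_le_mul_of_nonneg_right h1 (norm_nonneg _)
      _ = (M₂ * ‖v‖ ^ 2) * t := by ring
  have hB : ∀ t : ℝ, HasDerivAt (fun t => (M₂ * ‖v‖ ^ 2) * (t ^ 2 / 2)) ((M₂ * ‖v‖ ^ 2) * t) t := by
    intro t
    have := ((hasDerivAt_pow 2 t).div_const 2).const_mul (M₂ * ‖v‖ ^ 2)
    refine this.congr_deriv ?_
    norm_num
  have main := image_norm_le_of_norm_deriv_right_le_deriv_boundary
    (f := g) (a := 0) (b := 1)
    (fun t _ => ((hg' t).continuousAt).continuousWithinAt)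
    (fun t _ => (hg' t).hasDerivWithinAt)
    (by simp [hg]) hB bound (Set.right_mem_Icc.mpr zero_le_one)
  have hgval : g 1 = φ x - φ x₀ - fderiv ℝ φ x₀ v := by
    simp [hg, hv]; ring
  rw [← hgval]
  calc |g 1| ≤ (M₂ * ‖v‖ ^ 2) * ((1:ℝ) ^ 2 / 2) := main
    _ = M₂ / 2 * ‖v‖ ^ 2 := by ring

lemma stmt6_expdiff (a b : ℝ) :
    ‖Complex.exp (Complex.I * a) - Complex.exp (Complex.I * b)‖ ≤ |a - b| := by
  have key : ∀ t : ℝ, HasDerivAt (fun s : ℝ => Complex.exp (Complex.I * s))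
      (Complex.I * Complex.exp (Complex.I * t)) t := by
    intro t
    have h1 : HasDerivAt (fun s : ℝ => (s : ℂ)) 1 t := Complex.ofRealCLM.hasDerivAt
    have h2 := (Complex.hasDerivAt_exp (Complex.I * t)).comp t (h1.const_mul Complex.I)
    simpa [mul_comm, Function.comp_def] using h2
  have := Convex.norm_image_sub_le_of_norm_hasDerivWithin_le
    (f := fun s : ℝ => Complex.exp (Complex.I * s)) (C := 1) (s := Set.univ)
    (fun t _ => (key t).hasDerivWithinAt)
    (fun t _ => by simp [Complex.norm_exp]) convex_univ (Set.mem_univ b) (Set.mem_univ a)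
  simpa [Real.norm_eq_abs] using this

/-- `O(ω⁻¹)` approximation rate of the ray-FEM space with exact ray directions: in the
fixed-points-per-wavelength regime `h ≤ 1/ω`, `ω ≥ 1`, if the `P1` interpolation of the
amplitude is second-order accurate, `‖A − Σⱼ A(xⱼ)φⱼ‖_{L²(Ω)} ≤ C_A h²`, then
`‖u − u_I‖_{L²(Ω)} ≤ (C_A + M₂M₀|Ω|^{1/2}/2)ω⁻¹`. -/
theorem stmt_6 {d : ℕ} (hd : 1 ≤ d) {ι : Type*} (J : Finset ι)
    (Ω : Set (EuclideanSpace ℝ (Fin d)))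
    (hΩmeas : MeasurableSet Ω) (hΩfin : volume Ω < ⊤)
    (h : ℝ) (hh : 0 < h)
    (xj : ι → EuclideanSpace ℝ (Fin d))
    (φj : ι → EuclideanSpace ℝ (Fin d) → ℝ)
    (hφj : ∀ j ∈ J, ∀ x, 0 ≤ φj j x ∧ φj j x ≤ 1)
    (hsum : ∀ x ∈ Ω, ∑ j ∈ J, φj j x = 1)
    (hsupp : ∀ j ∈ J, ∀ x, h < ‖x - xj j‖ → φj j x = 0)
    (A : EuclideanSpace ℝ (Fin d) → ℝ)
    (M₀ : ℝ) (hM₀ : ∀ j ∈ J, |A (xj j)| ≤ M₀)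
    (φ : EuclideanSpace ℝ (Fin d) → ℝ) (hφ : ContDiff ℝ 2 φ)
    (M₂ : ℝ) (hM₂ : ∀ y, ‖fderiv ℝ (fun z => fderiv ℝ φ z) y‖ ≤ M₂)
    (ω : ℝ) (hω : 1 ≤ ω) (hhω : h ≤ 1 / ω)
    (CA : ℝ) (hCA0 : 0 ≤ CA)
    (hCA : eLpNorm (fun x => A x - ∑ j ∈ J, A (xj j) * φj j x) 2 (volume.restrict Ω)
        ≤ ENNReal.ofReal (CA * h ^ 2)) :
    eLpNorm (fun x => (A x : ℂ) * Complex.exp (Complex.I * (ω : ℂ) * (φ x : ℂ))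
        - ∑ j ∈ J, (A (xj j) : ℂ) * (φj j x : ℂ)
            * Complex.exp (Complex.I * (ω : ℂ)
                * ((φ (xj j) + ⟪gradient φ (xj j), x - xj j⟫_ℝ : ℝ) : ℂ)))
      2 (volume.restrict Ω)
    ≤ ENNReal.ofReal ((CA + M₂ * M₀ * Real.sqrt (volume Ω).toReal / 2) * ω⁻¹) := by
  classical
  by_cases hvol : volume Ω = 0
  · rw [Measure.restrict_eq_zero.mpr hvol]
    simp
  -- nonempty domain and index set
  rcases Set.eq_empty_or_nonempty Ω with rfl | hΩne
  · exact absurd (measure_empty) hvol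
  obtain ⟨x₀, hx₀⟩ := hΩne
  have hJne : J.Nonempty := by
    by_contra hJ
    rw [Finset.not_nonempty_iff_eq_empty] at hJ
    have := hsum x₀ hx₀
    rw [hJ] at this
    simp at this
  obtain ⟨j₀, hj₀⟩ := hJne
  have hM₀0 : 0 ≤ M₀ := le_trans (abs_nonneg _) (hM₀ j₀ hj₀)
  have hM₂0 : 0 ≤ M₂ := le_trans (ContinuousLinearMap.opNorm_nonneg _) (hM₂ 0)
  have hω0 : 0 < ω := lt_of_lt_of_le one_pos hω
  set μ := volume.restrict Ω with hμdef
  set C : ℝ := M₂ * M₀ / 2 * ω⁻¹ with hCdef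
  have hC0 : 0 ≤ C := by positivity
  set S : EuclideanSpace ℝ (Fin d) → ℝ := fun x => ∑ j ∈ J, A (xj j) * φj j x with hSdef
  set F : EuclideanSpace ℝ (Fin d) → ℂ := fun x =>
    (A x : ℂ) * Complex.exp (Complex.I * (ω : ℂ) * (φ x : ℂ))
      - ∑ j ∈ J, (A (xj j) : ℂ) * (φj j x : ℂ)
          * Complex.exp (Complex.I * (ω : ℂ)
              * ((φ (xj j) + ⟪gradient φ (xj j), x - xj j⟫_ℝ : ℝ) : ℂ)) with hFdef
  -- pointwise estimate on Ω
  have hωh2 : h ^ 2 ≤ ω⁻¹ := by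
    have h1ω : 1 / ω ≤ 1 := by rw [div_le_one hω0]; exact hω
    rw [← one_div]
    nlinarith [hhω, hh.le, h1ω, hω0]
  have hptw : ∀ x ∈ Ω, ‖F x‖ ≤ |A x - S x| + C := by
    intro x hx
    set e : ℂ := Complex.exp (Complex.I * (ω : ℂ) * (φ x : ℂ)) with hedef
    set K : ℝ := ω * (M₂ / 2 * h ^ 2) with hKdef
    have hK0 : 0 ≤ K := by positivity
    have he1 : ‖e‖ = 1 := by simp [hedef, Complex.norm_exp]
    have key : ∀ j ∈ J,
        ‖(A (xj j) : ℂ) * (φj j x : ℂ)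
            * (e - Complex.exp (Complex.I * (ω : ℂ)
                * ((φ (xj j) + ⟪gradient φ (xj j), x - xj j⟫_ℝ : ℝ) : ℂ)))‖
          ≤ (M₀ * K) * φj j x := by
      intro j hj
      by_cases hzero : φj j x = 0
      · simp [hzero]
      have hdist : ‖x - xj j‖ ≤ h := le_of_not_gt (fun hlt => hzero (hsupp j hj x hlt))
      have hgrad : ⟪gradient φ (xj j), x - xj j⟫_ℝ = fderiv ℝ φ (xj j) (x - xj j) := by
        simp [gradient, InnerProductSpace.toDual_symm_apply]
      set ℓ : ℝ := φ (xj j) + ⟪gradient φ (xj j), x - xj j⟫_ℝ with hℓdef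
      have hφℓ : |φ x - ℓ| ≤ M₂ / 2 * h ^ 2 := by
        rw [hℓdef, hgrad]
        calc |φ x - (φ (xj j) + fderiv ℝ φ (xj j) (x - xj j))|
            = |φ x - φ (xj j) - fderiv ℝ φ (xj j) (x - xj j)| := by ring_nf
          _ ≤ M₂ / 2 * ‖x - xj j‖ ^ 2 := stmt6_taylor φ hφ M₂ hM₂ (xj j) x
          _ ≤ M₂ / 2 * h ^ 2 := by
              apply mul_le_mul_of_nonneg_left _ (by positivity)
              exact pow_le_pow_left₀ (norm_nonneg _) hdist 2
      have hexp : ‖e - Complex.exp (Complex.I * (ω : ℂ) * (ℓ : ℂ))‖ ≤ K := by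
        have h1 := stmt6_expdiff (ω * φ x) (ω * ℓ)
        have h2 : Complex.I * ((ω * φ x : ℝ) : ℂ) = Complex.I * (ω : ℂ) * (φ x : ℂ) := by
          push_cast; ring
        have h3 : Complex.I * ((ω * ℓ : ℝ) : ℂ) = Complex.I * (ω : ℂ) * (ℓ : ℂ) := by
          push_cast; ring
        rw [h2, h3] at h1
        calc ‖e - Complex.exp (Complex.I * (ω : ℂ) * (ℓ : ℂ))‖ ≤ |ω * φ x - ω * ℓ| := h1
          _ = ω * |φ x - ℓ| := by rw [← mul_sub, abs_mul, abs_of_pos hω0]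
          _ ≤ ω * (M₂ / 2 * h ^ 2) := mul_le_mul_of_nonneg_left hφℓ hω0.le
          _ = K := hKdef.symm
      have hφ0 : 0 ≤ φj j x := (hφj j hj x).1
      calc ‖(A (xj j) : ℂ) * (φj j x : ℂ)
              * (e - Complex.exp (Complex.I * (ω : ℂ) * (ℓ : ℂ)))‖
          = |A (xj j)| * (φj j x
              * ‖e - Complex.exp (Complex.I * (ω : ℂ) * (ℓ : ℂ))‖) := by
            rw [norm_mul, norm_mul]
            simp [Real.norm_eq_abs, _root_.abs_of_nonneg hφ0, mul_assoc]
        _ ≤ M₀ * (φj j x * K) := by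
            apply mul_le_mul (hM₀ j hj) _ (by positivity) hM₀0
            exact mul_le_mul_of_nonneg_left hexp hφ0
        _ = (M₀ * K) * φj j x := by ring
    have hScast : ((S x : ℝ) : ℂ) = ∑ j ∈ J, (A (xj j) : ℂ) * (φj j x : ℂ) := by
      rw [hSdef]
      push_cast
      rfl
    have hdecomp : F x = ((A x : ℂ) - ((S x : ℝ) : ℂ)) * e
        + ∑ j ∈ J, (A (xj j) : ℂ) * (φj j x : ℂ)
            * (e - Complex.exp (Complex.I * (ω : ℂ)
                * ((φ (xj j) + ⟪gradient φ (xj j), x - xj j⟫_ℝ : ℝ) : ℂ))) := by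
      rw [hFdef, hScast]
      simp only [mul_sub]
      rw [Finset.sum_sub_distrib, sub_mul, Finset.sum_mul]
      ring
    have hMKC : M₀ * K ≤ C := by
      calc M₀ * K = M₀ * (M₂ / 2) * (ω * h ^ 2) := by rw [hKdef]; ring
        _ ≤ M₀ * (M₂ / 2) * (ω * (ω⁻¹ * ω⁻¹)) := by
            apply mul_le_mul_of_nonneg_left _ (by positivity)
            have : h ^ 2 ≤ ω⁻¹ * ω⁻¹ := by
              have := hhω
              rw [one_div] at this
              nlinarith [hh.le]
            exact mul_le_mul_of_nonneg_left this hω0.le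
        _ = M₀ * (M₂ / 2) * ω⁻¹ := by
            field_simp
        _ = C := by rw [hCdef]; ring
    calc ‖F x‖ ≤ ‖((A x : ℂ) - ((S x : ℝ) : ℂ)) * e‖
          + ‖∑ j ∈ J, (A (xj j) : ℂ) * (φj j x : ℂ)
            * (e - Complex.exp (Complex.I * (ω : ℂ)
                * ((φ (xj j) + ⟪gradient φ (xj j), x - xj j⟫_ℝ : ℝ) : ℂ)))‖ := by
          rw [hdecomp]; exact norm_add_le _ _
      _ ≤ |A x - S x| + ∑ j ∈ J, (M₀ * K) * φj j x := by
          apply add_le_add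
          · rw [norm_mul, he1, mul_one, ← Complex.ofReal_sub, Complex.norm_real, Real.norm_eq_abs]
          · exact (norm_sum_le _ _).trans (Finset.sum_le_sum key)
      _ = |A x - S x| + (M₀ * K) := by
          rw [← Finset.mul_sum, hsum x hx, mul_one]
      _ ≤ |A x - S x| + C := add_le_add_right hMKC _
  -- L² estimate
  set g : EuclideanSpace ℝ (Fin d) → ℝ≥0∞ := fun x => (‖A x - S x‖₊ : ℝ≥0∞) with hgdef
  set c : ℝ≥0∞ := ENNReal.ofReal C with hcdef
  have hμuniv : μ Set.univ = volume Ω := by rw [hμdef, Measure.restrict_apply_univ]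
  have hCA' : eLpNorm (fun x => A x - S x) 2 μ ≤ ENNReal.ofReal (CA * h ^ 2) := by
    simpa [hSdef] using hCA
  have hbound : ∀ᵐ x ∂μ, (‖F x‖₊ : ℝ≥0∞) ≤ g x + c := by
    rw [hμdef]
    filter_upwards [ae_restrict_mem hΩmeas] with x hx
    calc (‖F x‖₊ : ℝ≥0∞) = ENNReal.ofReal ‖F x‖ := (ofReal_norm _).symm
      _ ≤ ENNReal.ofReal (|A x - S x| + C) := ENNReal.ofReal_le_ofReal (hptw x hx)
      _ = ENNReal.ofReal |A x - S x| + ENNReal.ofReal C :=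
          ENNReal.ofReal_add (abs_nonneg _) hC0
      _ = g x + c := by
          rw [hgdef, hcdef, ← Real.norm_eq_abs, ofReal_norm, enorm_eq_nnnorm]
  have step1 : eLpNorm F 2 μ ≤ (∫⁻ x, (g x + c) ^ 2 ∂μ) ^ (1/2 : ℝ) := by
    rw [eLpNorm_eq_lintegral_rpow_enorm_toReal two_ne_zero ENNReal.ofNat_ne_top, ENNReal.toReal_ofNat]
    apply ENNReal.rpow_le_rpow _ (by norm_num)
    apply lintegral_mono_ae
    filter_upwards [hbound] with x hx
    calc (‖F x‖₊ : ℝ≥0∞) ^ (2:ℝ) = (‖F x‖₊ : ℝ≥0∞) ^ (2:ℕ) := by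
          rw [← ENNReal.rpow_natCast]; norm_num
      _ ≤ (g x + c) ^ 2 := pow_le_pow_left' hx 2
  have hV0 : μ Set.univ ≠ 0 := by rw [hμuniv]; exact hvol
  have hVtop : μ Set.univ ≠ ⊤ := by rw [hμuniv]; exact hΩfin.ne
  have step2 := stmt6_mink μ g c ENNReal.ofReal_ne_top hV0 hVtop
  have step3 : (∫⁻ x, g x ^ 2 ∂μ) ^ (1/2 : ℝ) ≤ ENNReal.ofReal (CA * h ^ 2) := by
    have heq : eLpNorm (fun x => A x - S x) 2 μ = (∫⁻ x, g x ^ 2 ∂μ) ^ (1/2 : ℝ) := by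
      rw [eLpNorm_eq_lintegral_rpow_enorm_toReal two_ne_zero ENNReal.ofNat_ne_top, ENNReal.toReal_ofNat]
      congr 1
      apply lintegral_congr
      intro x
      rw [hgdef, ← ENNReal.rpow_natCast, enorm_eq_nnnorm]
      norm_num
    rw [← heq]
    exact hCA'
  have hvolhalf : (volume Ω) ^ (1/2 : ℝ) = ENNReal.ofReal (Real.sqrt (volume Ω).toReal) := by
    conv_lhs => rw [← ENNReal.ofReal_toReal hΩfin.ne]
    rw [ENNReal.ofReal_rpow_of_nonneg ENNReal.toReal_nonneg (by norm_num : (0:ℝ) ≤ 1/2)]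
    rw [← Real.sqrt_eq_rpow]
  calc eLpNorm F 2 μ ≤ (∫⁻ x, (g x + c) ^ 2 ∂μ) ^ (1/2 : ℝ) := step1
    _ ≤ (∫⁻ x, g x ^ 2 ∂μ) ^ (1/2 : ℝ) + c * (μ Set.univ) ^ (1/2 : ℝ) := step2
    _ ≤ ENNReal.ofReal (CA * h ^ 2)
        + ENNReal.ofReal C * ENNReal.ofReal (Real.sqrt (volume Ω).toReal) := by
        rw [hμuniv, hvolhalf, hcdef]
        exact add_le_add_left step3 _
    _ = ENNReal.ofReal (CA * h ^ 2 + C * Real.sqrt (volume Ω).toReal) := by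
        rw [← ENNReal.ofReal_mul hC0, ← ENNReal.ofReal_add (by positivity) (by positivity)]
    _ ≤ ENNReal.ofReal ((CA + M₂ * M₀ * Real.sqrt (volume Ω).toReal / 2) * ω⁻¹) := by
        apply ENNReal.ofReal_le_ofReal
        have hs0 : 0 ≤ Real.sqrt (volume Ω).toReal := Real.sqrt_nonneg _
        have hCAh : CA * h ^ 2 ≤ CA * ω⁻¹ := mul_le_mul_of_nonneg_left hωh2 hCA0
        rw [hCdef]
        nlinarith [hCAh, hs0]
end

section
/- For every natural number L and every real θ, the normalized Dirichlet kernel satisfies |S_L(θ)| ≤ 1, with S_L(θ) = 1 whenever θ is an integer multiple of 2π. Moreover, for every L ≥ 1 and every θ with 2π/(2L+1) ≤ |θ| ≤ π, one has |S_L(θ)| ≤ 1/2. -/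
open Complex
open scoped BigOperators Real

/-- The normalized Dirichlet kernel `S_L(θ) = (2L+1)⁻¹ Σ_{l=−L}^{L} e^{ilθ}`. -/
noncomputable def dirichletS (L : ℕ) (θ : ℝ) : ℂ :=
  (2 * (L : ℂ) + 1)⁻¹ * ∑ l ∈ Finset.Icc (-(L : ℤ)) (L : ℤ),
    Complex.exp (Complex.I * (l : ℂ) * (θ : ℂ))

lemma card_Icc_neg (L : ℕ) : (Finset.Icc (-(L : ℤ)) (L : ℤ)).card = 2 * L + 1 := by
  rw [Int.card_Icc]; omega

lemma dirichlet_sum_eq (L : ℕ) (θ : ℝ) :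
    ∑ l ∈ Finset.Icc (-(L : ℤ)) (L : ℤ), Complex.exp (Complex.I * (l : ℂ) * (θ : ℂ))
      = Complex.exp (-(Complex.I * L * θ)) *
        ∑ k ∈ Finset.range (2 * L + 1), Complex.exp (Complex.I * θ) ^ k := by
  rw [Finset.mul_sum]
  refine Finset.sum_nbij' (fun l => (l + L).toNat) (fun k => (k : ℤ) - L) ?_ ?_ ?_ ?_ ?_
  · intro l hl; simp only [Finset.mem_Icc] at hl; simp only [Finset.mem_range]; omega
  · intro k hk; simp only [Finset.mem_range] at hk; simp only [Finset.mem_Icc]; omega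
  · intro l hl; simp only [Finset.mem_Icc] at hl; omega
  · intro k hk; simp only [Finset.mem_range] at hk; omega
  · intro l hl
    simp only [Finset.mem_Icc] at hl
    rw [← Complex.exp_nat_mul, ← Complex.exp_add]
    congr 1
    have h1 : (((l + (L : ℤ)).toNat : ℤ) : ℂ) = (l : ℂ) + (L : ℂ) := by
      rw [Int.toNat_of_nonneg (by omega)]; push_cast; ring
    push_cast at h1 ⊢
    rw [h1]; ring

lemma abs_exp_I_mul (x : ℝ) : ‖Complex.exp (Complex.I * x)‖ = 1 := by
  rw [Complex.norm_exp]
  simp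

lemma exp_sub_one_eq (θ : ℝ) :
    Complex.exp (Complex.I * θ) - 1
      = Complex.exp (Complex.I * θ / 2) * (2 * Complex.I * (Real.sin (θ / 2) : ℂ)) := by
  rw [Complex.ofReal_sin, Complex.sin]
  push_cast
  have h2 : Complex.exp (Complex.I * (θ : ℂ)) =
      Complex.exp (Complex.I * θ / 2) * Complex.exp (Complex.I * θ / 2) := by
    rw [← Complex.exp_add]; congr 1; ring
  rw [h2,
    show (-((θ : ℂ) / 2) * Complex.I) = -(Complex.I * θ / 2) by ring,
    show (((θ : ℂ) / 2) * Complex.I) = Complex.I * θ / 2 by ring]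
  have h1 : Complex.exp (Complex.I * θ / 2) * Complex.exp (-(Complex.I * θ / 2)) = 1 := by
    rw [← Complex.exp_add]; simp
  linear_combination h1 - Complex.exp (Complex.I * (θ : ℂ) / 2) *
    (Complex.exp (-(Complex.I * (θ : ℂ) / 2)) - Complex.exp (Complex.I * (θ : ℂ) / 2)) *
    Complex.I_sq

lemma abs_exp_sub_one (θ : ℝ) :
    ‖Complex.exp (Complex.I * θ) - 1‖ = 2 * |Real.sin (θ / 2)| := by
  rw [exp_sub_one_eq, norm_mul, show (Complex.I * (θ : ℂ) / 2) = Complex.I * ((θ : ℝ) / 2 : ℝ) by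
    push_cast; ring, abs_exp_I_mul, one_mul, norm_mul, norm_mul, Complex.norm_two, Complex.norm_I,
    Complex.norm_real, Real.norm_eq_abs, mul_one]

/-- Peak structure of the normalized Dirichlet kernel: `|S_L(θ)| ≤ 1` everywhere,
`S_L(θ) = 1` at integer multiples of `2π`, and for `L ≥ 1`,
`|S_L(θ)| ≤ 1/2` whenever `2π/(2L+1) ≤ |θ| ≤ π`. -/
theorem stmt_10 (L : ℕ) :
    (∀ θ : ℝ, ‖dirichletS L θ‖ ≤ 1) ∧
    (∀ θ : ℝ, (∃ m : ℤ, θ = 2 * π * m) → dirichletS L θ = 1) ∧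
    (1 ≤ L → ∀ θ : ℝ, 2 * π / (2 * L + 1) ≤ |θ| → |θ| ≤ π →
      ‖dirichletS L θ‖ ≤ 1 / 2) := by
  have hcoef : (2 * (L : ℂ) + 1) = (((2 * L + 1 : ℕ) : ℝ) : ℂ) := by push_cast; ring
  have habscoef : ‖(2 * (L : ℂ) + 1)⁻¹‖ = ((2 * L + 1 : ℕ) : ℝ)⁻¹ := by
    rw [norm_inv, hcoef, Complex.norm_real, Real.norm_eq_abs, _root_.abs_of_nonneg (by positivity)]
  refine ⟨?_, ?_, ?_⟩
  · intro θ
    rw [dirichletS, norm_mul, habscoef]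
    have hsum : ‖∑ l ∈ Finset.Icc (-(L : ℤ)) (L : ℤ),
        Complex.exp (Complex.I * (l : ℂ) * (θ : ℂ))‖ ≤ (2 * L + 1 : ℕ) := by
      calc ‖∑ l ∈ Finset.Icc (-(L : ℤ)) (L : ℤ),
            Complex.exp (Complex.I * (l : ℂ) * (θ : ℂ))‖
          ≤ ∑ l ∈ Finset.Icc (-(L : ℤ)) (L : ℤ),
            ‖Complex.exp (Complex.I * (l : ℂ) * (θ : ℂ))‖ :=
            norm_sum_le _ _
        _ = ∑ l ∈ Finset.Icc (-(L : ℤ)) (L : ℤ), 1 := by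
            refine Finset.sum_congr rfl fun l _ => ?_
            rw [show (Complex.I * (l : ℂ) * (θ : ℂ)) = Complex.I * ((l * θ : ℝ) : ℂ) by
              push_cast; ring]
            exact abs_exp_I_mul _
        _ = (2 * L + 1 : ℕ) := by rw [Finset.sum_const, card_Icc_neg]; simp
    have hpos : (0 : ℝ) < (2 * L + 1 : ℕ) := by positivity
    rw [inv_mul_le_iff₀ hpos, mul_one]
    exact hsum
  · rintro θ ⟨m, rfl⟩
    rw [dirichletS]
    have : ∀ l ∈ Finset.Icc (-(L : ℤ)) (L : ℤ),
        Complex.exp (Complex.I * (l : ℂ) * ((2 * π * m : ℝ) : ℂ)) = 1 := by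
      intro l _
      rw [show (Complex.I * (l : ℂ) * ((2 * π * m : ℝ) : ℂ))
          = ((l * m : ℤ) : ℂ) * (2 * π * Complex.I) by push_cast; ring]
      exact Complex.exp_int_mul_two_pi_mul_I _
    rw [Finset.sum_congr rfl this, Finset.sum_const, card_Icc_neg]
    have hne : (2 * (L : ℂ) + 1) ≠ 0 := by
      rw [hcoef]
      simp only [ne_eq, Complex.ofReal_eq_zero]
      positivity
    simp only [nsmul_eq_mul, mul_one]
    rw [show ((2 * L + 1 : ℕ) : ℂ) = 2 * (L : ℂ) + 1 by push_cast; ring]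
    exact inv_mul_cancel₀ hne
  · intro hL θ hθ1 hθ2
    have hpiL : (0 : ℝ) < 2 * π / (2 * L + 1) := by positivity
    have hθpos : 0 < |θ| := lt_of_lt_of_le hpiL hθ1
    -- Jordan bound on sin(θ/2)
    have hsin : |θ| / π ≤ |Real.sin (θ / 2)| := by
      have h0 : |θ / 2| ≤ π / 2 := by
        rw [abs_div, _root_.abs_two]; linarith
      have h := Real.mul_abs_le_abs_sin h0
      calc |θ| / π = 2 / π * |θ / 2| := by
            rw [abs_div, _root_.abs_two]; ring
        _ ≤ |Real.sin (θ / 2)| := h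
    have hsinpos : 0 < |Real.sin (θ / 2)| :=
      lt_of_lt_of_le (by positivity) hsin
    set z : ℂ := Complex.exp (Complex.I * θ) with hz
    have habsz : ‖z‖ = 1 := abs_exp_I_mul θ
    have hzne : z ≠ 1 := by
      intro h
      have : ‖z - 1‖ = 0 := by rw [h]; simp
      rw [abs_exp_sub_one] at this
      nlinarith
    have hgeom : ∑ k ∈ Finset.range (2 * L + 1), z ^ k
        = (z ^ (2 * L + 1) - 1) / (z - 1) := geom_sum_eq hzne _
    have habsd : ‖z - 1‖ = 2 * |Real.sin (θ / 2)| := abs_exp_sub_one θ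
    have habsn : ‖z ^ (2 * L + 1) - 1‖ ≤ 2 := by
      calc ‖z ^ (2 * L + 1) - 1‖
          ≤ ‖z ^ (2 * L + 1)‖ + ‖(1:ℂ)‖ := by
            exact (norm_sub_le _ _)
        _ = 2 := by rw [norm_pow, habsz, one_pow, norm_one]; norm_num
    have hsum : ‖∑ l ∈ Finset.Icc (-(L : ℤ)) (L : ℤ),
        Complex.exp (Complex.I * (l : ℂ) * (θ : ℂ))‖ ≤ 2 / (2 * |Real.sin (θ / 2)|) := by
      rw [dirichlet_sum_eq, norm_mul, hgeom, norm_div, habsd]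
      have h1 : ‖Complex.exp (-(Complex.I * (L : ℂ) * (θ : ℂ)))‖ = 1 := by
        rw [show (-(Complex.I * (L : ℂ) * (θ : ℂ)))
            = Complex.I * ((-(L * θ) : ℝ) : ℂ) by push_cast; ring]
        exact abs_exp_I_mul _
      rw [h1, one_mul]
      gcongr
    rw [dirichletS, norm_mul, habscoef]
    have hkey : (4 : ℝ) ≤ (2 * L + 1 : ℕ) * (2 * |Real.sin (θ / 2)|) := by
      have h2 : 2 * π / (2 * L + 1) / π ≤ |Real.sin (θ / 2)| := by
        refine le_trans ?_ hsin
        gcongr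
      have h3 : 2 * π / (2 * L + 1) / π = 2 / (2 * L + 1) := by
        field_simp
      rw [h3] at h2
      have hLpos : (0 : ℝ) < 2 * L + 1 := by positivity
      rw [div_le_iff₀ hLpos] at h2
      push_cast
      nlinarith
    calc ((2 * L + 1 : ℕ) : ℝ)⁻¹ * ‖∑ l ∈ Finset.Icc (-(L : ℤ)) (L : ℤ),
          Complex.exp (Complex.I * (l : ℂ) * (θ : ℂ))‖
        ≤ ((2 * L + 1 : ℕ) : ℝ)⁻¹ * (2 / (2 * |Real.sin (θ / 2)|)) := by
          exact mul_le_mul_of_nonneg_left hsum (by positivity)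
      _ ≤ 1 / 2 := by
          rw [show ((2 * L + 1 : ℕ) : ℝ)⁻¹ * (2 / (2 * |Real.sin (θ / 2)|))
              = 2 / ((2 * L + 1 : ℕ) * (2 * |Real.sin (θ / 2)|)) by
            field_simp]
          rw [div_le_div_iff₀ (by positivity) (by norm_num)]
          linarith
end

section
/- Let N ≥ 1, let θ_1, …, θ_N ∈ [0, 2π) be pairwise distinct, and let B_1, …, B_N ∈ ℂ. Define F_L(θ) := Σ_{n=1}^{N} B_n · S_L(θ − θ_n). Then (i) for each m ∈ {1,…,N}, F_L(θ_m) → B_m as L → ∞, and (ii) for every θ ∈ [0, 2π) with θ ≠ θ_n for all n, F_L(θ) → 0 as L → ∞. -/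
open Complex Filter
open scoped BigOperators Real Topology

lemma dirichletS_zero (L : ℕ) : dirichletS L 0 = 1 := by
  unfold dirichletS
  have : ∀ l ∈ Finset.Icc (-(L : ℤ)) (L : ℤ),
      Complex.exp (Complex.I * (l : ℂ) * ((0:ℝ) : ℂ)) = 1 := by
    intro l _; simp
  rw [Finset.sum_congr rfl this, Finset.sum_const, Int.card_Icc]
  have : ((L : ℤ) + 1 - -(L:ℤ)).toNat = 2 * L + 1 := by omega
  rw [this]
  have h : ((2 * L + 1 : ℕ) : ℂ) = 2 * (L : ℂ) + 1 := by push_cast; ring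
  rw [nsmul_eq_mul, h, mul_one]
  have hne : 2 * (L : ℂ) + 1 ≠ 0 := by
    intro h0
    have := congrArg Complex.re h0
    simp at this
    nlinarith [Nat.cast_nonneg (α := ℝ) L, this]
  exact inv_mul_cancel₀ hne

lemma dirichletS_tendsto_zero {x : ℝ} (hx : Complex.exp (Complex.I * x) ≠ 1) :
    Tendsto (fun L : ℕ => dirichletS L x) atTop (𝓝 0) := by
  set z : ℂ := Complex.exp (Complex.I * x) with hz
  have hzne : z ≠ 0 := Complex.exp_ne_zero _
  have hznorm : ‖z‖ = 1 := by
    rw [hz]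
    rw [Complex.norm_exp]
    simp [mul_comm]
  -- sum formula
  have hsum : ∀ L : ℕ, ∑ l ∈ Finset.Icc (-(L : ℤ)) (L : ℤ),
      Complex.exp (Complex.I * (l : ℂ) * (x : ℂ)) =
      z ^ (-(L:ℤ)) * ∑ k ∈ Finset.range (2 * L + 1), z ^ k := by
    intro L
    have key : ∑ l ∈ Finset.Icc (-(L : ℤ)) (L : ℤ),
        Complex.exp (Complex.I * (l : ℂ) * (x : ℂ)) =
        ∑ k ∈ Finset.range (2 * L + 1), z ^ ((k : ℤ) - L) := by
      apply Finset.sum_nbij' (fun (l : ℤ) => (l + L).toNat) (fun (k : ℕ) => (k : ℤ) - L)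
      · intro l hl; simp only [Finset.mem_Icc] at hl; simp only [Finset.mem_range]; omega
      · intro k hk; simp only [Finset.mem_range] at hk; simp only [Finset.mem_Icc]; omega
      · intro l hl; simp only [Finset.mem_Icc] at hl; omega
      · intro k hk; simp only [Finset.mem_range] at hk; omega
      · intro l hl
        simp only [Finset.mem_Icc] at hl
        have h1 : ((l + L).toNat : ℤ) - (L : ℤ) = l := by omega
        rw [h1]
        have h2 : Complex.I * (l : ℂ) * x = (l : ℂ) * (Complex.I * x) := by ring
        rw [h2, hz, ← Complex.exp_int_mul]
    rw [key, Finset.mul_sum]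
    apply Finset.sum_congr rfl
    intro k hk
    rw [← zpow_natCast z k, ← zpow_add₀ hzne]
    congr 1; omega
  -- norm bound
  have hbound : ∀ L : ℕ, ‖dirichletS L x‖ ≤ ((2 * L + 1 : ℝ))⁻¹ * (2 / ‖z - 1‖) := by
    intro L
    unfold dirichletS
    rw [hsum L, norm_mul, norm_mul]
    have h1 : ‖(2 * (L : ℂ) + 1)⁻¹‖ = ((2 * L + 1 : ℝ))⁻¹ := by
      rw [norm_inv]
      congr 1
      have : (2 * (L:ℂ) + 1) = ((2 * L + 1 : ℝ) : ℂ) := by push_cast; ring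
      rw [this, Complex.norm_real, Real.norm_eq_abs, abs_of_pos]
      positivity
    rw [h1]
    have h2 : ‖z ^ (-(L:ℤ))‖ = 1 := by
      rw [norm_zpow, hznorm, one_zpow]
    rw [h2, one_mul]
    apply mul_le_mul_of_nonneg_left ?_ (by positivity)
    have hz1 : z - 1 ≠ 0 := sub_ne_zero.mpr hx
    rw [geom_sum_eq hx, le_div_iff₀ (norm_pos_iff.mpr hz1)]
    calc ‖(z ^ (2*L+1) - 1) / (z - 1)‖ * ‖z - 1‖ = ‖z ^ (2*L+1) - 1‖ := by
          rw [← norm_mul, div_mul_cancel₀ _ hz1]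
      _ ≤ ‖z ^ (2*L+1)‖ + ‖(1:ℂ)‖ := norm_sub_le _ _
      _ ≤ 2 := by rw [norm_pow, hznorm, one_pow, norm_one]; norm_num
  apply squeeze_zero_norm hbound
  have : Tendsto (fun L : ℕ => ((2 * L + 1 : ℝ))⁻¹) atTop (𝓝 0) := by
    apply tendsto_inv_atTop_zero.comp
    apply tendsto_atTop_add_const_right
    exact (tendsto_natCast_atTop_atTop).const_mul_atTop (by norm_num)
  simpa using this.mul_const (2 / ‖z - 1‖)

lemma exp_I_ne_one {x : ℝ} (h1 : -(2*π) < x) (h2 : x < 2*π) (h0 : x ≠ 0) :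
    Complex.exp (Complex.I * x) ≠ 1 := by
  intro h
  rw [Complex.exp_eq_one_iff] at h
  obtain ⟨n, hn⟩ := h
  have hx : (x : ℂ) = n * (2 * π) := by
    apply mul_left_cancel₀ Complex.I_ne_zero
    rw [hn]; push_cast; ring
  have hxr : x = n * (2 * π) := by exact_mod_cast hx
  have hπ := Real.pi_pos
  have hn1 : (n:ℝ) < 1 := by nlinarith
  have hn2 : (-1:ℝ) < (n:ℝ) := by nlinarith
  have a1 : n < 1 := by exact_mod_cast hn1
  have a2 : (-1:ℤ) < n := by exact_mod_cast hn2
  have : n = 0 := by omega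
  rw [this] at hxr
  simp at hxr
  exact h0 hxr

/-- Asymptotic concentration of the NMLA-filtered data
`F_L(θ) = Σ_{n} B_n S_L(θ − θ_n)` for pairwise distinct angles `θ_n ∈ [0, 2π)`:
as `L → ∞`, `F_L(θ_m) → B_m` at each plane-wave angle, and `F_L(θ) → 0` at every
other angle in `[0, 2π)`. -/
theorem stmt_11 {N : ℕ} (hN : 1 ≤ N) (θ : Fin N → ℝ)
    (hθmem : ∀ n, θ n ∈ Set.Ico (0 : ℝ) (2 * π))
    (hθinj : Function.Injective θ)
    (B : Fin N → ℂ) :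
    (∀ m : Fin N,
      Tendsto (fun L : ℕ => ∑ n : Fin N, B n * dirichletS L (θ m - θ n))
        atTop (𝓝 (B m))) ∧
    (∀ t ∈ Set.Ico (0 : ℝ) (2 * π), (∀ n, t ≠ θ n) →
      Tendsto (fun L : ℕ => ∑ n : Fin N, B n * dirichletS L (t - θ n))
        atTop (𝓝 0)) := by
  have hdiff : ∀ (s : ℝ), s ∈ Set.Ico (0:ℝ) (2*π) → ∀ n : Fin N, s ≠ θ n →
      Complex.exp (Complex.I * ((s - θ n : ℝ) : ℂ)) ≠ 1 := by
    intro s hs n hne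
    have h1 := (hθmem n).1
    have h2 := (hθmem n).2
    exact exp_I_ne_one (by cases hs; linarith) (by cases hs; linarith)
      (sub_ne_zero.mpr hne)
  constructor
  · intro m
    have key : ∀ L : ℕ, ∑ n : Fin N, B n * dirichletS L (θ m - θ n) =
        B m + ∑ n ∈ Finset.univ.erase m, B n * dirichletS L (θ m - θ n) := by
      intro L
      rw [← Finset.add_sum_erase _ _ (Finset.mem_univ m), sub_self, dirichletS_zero,
        mul_one]
    simp_rw [key]
    have h0 : Tendsto (fun L : ℕ => ∑ n ∈ Finset.univ.erase m,
        B n * dirichletS L (θ m - θ n)) atTop (𝓝 0) := by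
      have := tendsto_finset_sum (Finset.univ.erase m)
        (fun n hn => Tendsto.const_mul (B n) (dirichletS_tendsto_zero
          (hdiff (θ m) (hθmem m) n (fun h => (Finset.mem_erase.mp hn).1 (hθinj h).symm))))
      simpa using this
    simpa using tendsto_const_nhds.add h0
  · intro t ht hne
    have := tendsto_finset_sum (Finset.univ : Finset (Fin N))
      (fun n _ => Tendsto.const_mul (B n) (dirichletS_tendsto_zero
        (hdiff t ht n (hne n))))
    simpa using this
end

section
/- Let d ≥ 1, x₀ ∈ E = EuclideanSpace ℝ (Fin d), r > 0, let A : E → ℝ be continuously differentiable and φ : E → ℝ twice continuously differentiable on B = closedBall(x₀, r), and assume ∇φ(x₀) ≠ 0. Set C₁ := sup_B ‖∇A‖, C₂ := sup_B |A|, C₃ := sup_B ‖∇²φ‖ (operator norm), and η₀ := ‖∇φ(x₀)‖. Define u(x) := A(x)e^{iωφ(x)}, u₀(x) := A(x₀)e^{iω(φ(x₀)+⟨∇φ(x₀), x−x₀⟩)}, δu := u − u₀, and for a unit vector ŝ ∈ E the impedance perturbation δU(x) := (1/(iωη₀))·D_ŝ(δu)(x) + δu(x), where D_ŝ denotes the directional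 derivative along ŝ. Then for every ω > 0, every unit vector ŝ, and x = x₀ + r ŝ, |δU(x)| ≤ C₁/(ω η₀) + 2 r C₁ + ( r C₂/η₀ + ω r² C₂ )·C₃. -/
open Complex Metric
open scoped InnerProductSpace BigOperators

open Set

private lemma aux_exp_sub (a b : ℝ) :
    ‖Complex.exp ((a : ℂ) * Complex.I) - Complex.exp ((b : ℂ) * Complex.I)‖
      ≤ |a - b| := by
  have hder : ∀ t : ℝ, HasDerivAt (fun t : ℝ => Complex.exp ((t : ℂ) * Complex.I))
      (Complex.exp ((t : ℂ) * Complex.I) * Complex.I) t := by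
    intro t
    have h1 : HasDerivAt (fun t : ℝ => (t : ℂ) * Complex.I) Complex.I t := by
      simpa using (Complex.ofRealCLM.hasDerivAt (x := t)).mul_const Complex.I
    simpa using h1.cexp
  have h := convex_univ.norm_image_sub_le_of_norm_hasDerivWithin_le (C := 1)
    (f := fun t : ℝ => Complex.exp ((t : ℂ) * Complex.I))
    (fun y _ => (hder y).hasDerivWithinAt)
    (fun y _ => by simp [Complex.norm_exp]) (Set.mem_univ b) (Set.mem_univ a)
  simpa [Real.norm_eq_abs] using h

private lemma aux_half {g g' : ℝ → ℝ} {K : ℝ}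
    (hd : ∀ t ∈ Icc (0:ℝ) 1, HasDerivWithinAt g (g' t) (Icc 0 1) t)
    (hb : ∀ t ∈ Ico (0:ℝ) 1, |g' t| ≤ K * t) :
    |g 1 - g 0| ≤ K / 2 := by
  have hcont : ContinuousOn (fun t => g t - g 0) (Icc 0 1) := by
    have : ContinuousOn g (Icc 0 1) :=
      fun t ht => (hd t ht).differentiableWithinAt.continuousWithinAt
    exact this.sub continuousOn_const
  have hf' : ∀ t ∈ Ico (0:ℝ) 1, HasDerivWithinAt (fun t => g t - g 0) (g' t) (Ici t) t := by
    intro t ht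
    have hmem : Icc (0:ℝ) 1 ∈ nhdsWithin t (Ici t) := by
      apply Filter.mem_of_superset (inter_mem_nhdsWithin (Ici t) (Iio_mem_nhds ht.2))
      rintro y ⟨hy1, hy2⟩
      exact ⟨le_trans ht.1 hy1, le_of_lt hy2⟩
    exact ((hd t (Ico_subset_Icc_self ht)).sub_const (g 0)).mono_of_mem_nhdsWithin hmem
  have hB : ∀ t : ℝ, HasDerivAt (fun t => K * t ^ 2 / 2) (K * t) t := by
    intro t
    have h := ((hasDerivAt_pow 2 t).const_mul K).div_const 2
    exact h.congr_deriv (by ring)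
  have h := image_norm_le_of_norm_deriv_right_le_deriv_boundary hcont hf'
    (by simp) hB (fun t ht => by simpa [Real.norm_eq_abs] using hb t ht)
  have h1 := h (right_mem_Icc.2 zero_le_one)
  rw [Real.norm_eq_abs] at h1
  calc |g 1 - g 0| ≤ K * 1 ^ 2 / 2 := h1
    _ = K / 2 := by ring


private lemma aux_alg (w h a a₀ α p q E₁ E₂ : ℂ) (hw : w ≠ 0) (hh : h ≠ 0) :
    1 / (w * h) * (a * (E₁ * (w * p)) + E₁ * α - a₀ * (E₂ * (w * q))) + (a * E₁ - a₀ * E₂)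
      = α * E₁ / (w * h) + a * (p - q) * E₁ / h + (a - a₀) * q * E₁ / h
        + a₀ * q * (E₁ - E₂) / h + (a - a₀) * E₁ + a₀ * (E₁ - E₂) := by
  have hk : ∀ z : ℂ, 1 / (w * h) * (w * z) = z / h := fun z => by
    rw [one_div, inv_mul_eq_div, mul_div_mul_left z h hw]
  calc 1 / (w * h) * (a * (E₁ * (w * p)) + E₁ * α - a₀ * (E₂ * (w * q))) + (a * E₁ - a₀ * E₂)
      = 1 / (w * h) * (w * (a * p * E₁)) - 1 / (w * h) * (w * (a₀ * q * E₂))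
        + 1 / (w * h) * (E₁ * α) + (a * E₁ - a₀ * E₂) := by ring
    _ = (a * p * E₁) / h - (a₀ * q * E₂) / h + 1 / (w * h) * (E₁ * α)
        + (a * E₁ - a₀ * E₂) := by rw [hk, hk]
    _ = α * E₁ / (w * h) + a * (p - q) * E₁ / h + (a - a₀) * q * E₁ / h
        + a₀ * q * (E₁ - E₂) / h + (a - a₀) * E₁ + a₀ * (E₁ - E₂) := by ring


set_option maxHeartbeats 2000000 in
/-- Bound on the impedance-data perturbation seen by NMLA: for a single smooth wave front
`u = A e^{iωφ}`, its local plane-wave approximation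
`u₀(x) = A(x₀)e^{iω(φ(x₀) + ⟨∇φ(x₀), x − x₀⟩)}`, `δu = u − u₀` and the impedance
perturbation `δU(x) = (1/(iωη₀))D_ŝ(δu)(x) + δu(x)` with `η₀ = ‖∇φ(x₀)‖`, one has, at
`x = x₀ + rŝ` for any unit `ŝ`,
`|δU(x)| ≤ C₁/(ωη₀) + 2rC₁ + (rC₂/η₀ + ωr²C₂)C₃`
where `C₁ = sup_B ‖∇A‖`, `C₂ = sup_B |A|`, `C₃ = sup_B ‖∇²φ‖` on `B = closedBall(x₀, r)`. -/
theorem stmt_14 {d : ℕ} (hd : 1 ≤ d)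
    (x₀ : EuclideanSpace ℝ (Fin d)) (r : ℝ) (hr : 0 < r)
    (A φ : EuclideanSpace ℝ (Fin d) → ℝ)
    (hA : ContDiffOn ℝ 1 A (closedBall x₀ r))
    (hφ : ContDiffOn ℝ 2 φ (closedBall x₀ r))
    (hgrad : gradient φ x₀ ≠ 0)
    (C₁ C₂ C₃ : ℝ)
    (hC₁ : ∀ y ∈ closedBall x₀ r, ‖fderivWithin ℝ A (closedBall x₀ r) y‖ ≤ C₁)
    (hC₂ : ∀ y ∈ closedBall x₀ r, |A y| ≤ C₂)
    (hC₃ : ∀ y ∈ closedBall x₀ r,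
      ‖fderivWithin ℝ (fun z => fderivWithin ℝ φ (closedBall x₀ r) z)
          (closedBall x₀ r) y‖ ≤ C₃) :
    ∀ ω : ℝ, 0 < ω →
      ∀ δu : EuclideanSpace ℝ (Fin d) → ℂ,
      (∀ y, δu y = (A y : ℂ) * Complex.exp (Complex.I * (ω : ℂ) * (φ y : ℂ))
          - (A x₀ : ℂ) * Complex.exp (Complex.I * (ω : ℂ)
              * ((φ x₀ + ⟪gradient φ x₀, y - x₀⟫_ℝ : ℝ) : ℂ))) →
      ∀ s : EuclideanSpace ℝ (Fin d), ‖s‖ = 1 →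
        ‖((1 / (Complex.I * (ω : ℂ) * ((‖gradient φ x₀‖ : ℝ) : ℂ)))
              * fderivWithin ℝ δu (closedBall x₀ r) (x₀ + r • s) s
            + δu (x₀ + r • s))‖
        ≤ C₁ / (ω * ‖gradient φ x₀‖) + 2 * r * C₁
          + (r * C₂ / ‖gradient φ x₀‖ + ω * r ^ 2 * C₂) * C₃ := by
  intro ω hω δu hδu s hs
  set B : Set (EuclideanSpace ℝ (Fin d)) := closedBall x₀ r with hBdef
  have hBconv : Convex ℝ B := convex_closedBall x₀ r
  have hBuniq : UniqueDiffOn ℝ B := uniqueDiffOn_convex hBconv (by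
    rw [hBdef, interior_closedBall x₀ (ne_of_gt hr)]; exact ⟨x₀, mem_ball_self hr⟩)
  set g : EuclideanSpace ℝ (Fin d) := gradient φ x₀ with hgdef
  set η : ℝ := ‖g‖ with hηdef
  have hη : 0 < η := norm_pos_iff.2 hgrad
  set x : EuclideanSpace ℝ (Fin d) := x₀ + r • s with hxdef
  have hxx : x - x₀ = r • s := by rw [hxdef]; abel
  have hnorm_rs : ‖r • s‖ = r := by rw [norm_smul, hs, Real.norm_eq_abs, abs_of_pos hr, mul_one]
  have hx₀B : x₀ ∈ B := mem_closedBall_self (le_of_lt hr)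
  have hxB : x ∈ B := by
    rw [hBdef, mem_closedBall_iff_norm, hxx, hnorm_rs]
  have hAd : DifferentiableOn ℝ A B := hA.differentiableOn one_ne_zero
  have hφd : DifferentiableOn ℝ φ B := hφ.differentiableOn (by norm_num)
  have hφ'd : DifferentiableOn ℝ (fun y => fderivWithin ℝ φ B y) B :=
    (hφ.fderivWithin hBuniq (by norm_num)).differentiableOn one_ne_zero
  -- mean value estimates
  have hAlip : ∀ y ∈ B, |A y - A x₀| ≤ C₁ * ‖y - x₀‖ := fun y hy => by
    simpa [Real.norm_eq_abs] using
      hBconv.norm_image_sub_le_of_norm_fderivWithin_le hAd hC₁ hx₀B hy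
  have hφ'lip : ∀ y ∈ B,
      ‖fderivWithin ℝ φ B y - fderivWithin ℝ φ B x₀‖ ≤ C₃ * ‖y - x₀‖ := fun y hy =>
    hBconv.norm_image_sub_le_of_norm_fderivWithin_le hφ'd hC₃ hx₀B hy
  -- gradient and fderivWithin
  have hgapp : ∀ w, ⟪g, w⟫_ℝ = fderivWithin ℝ φ B x₀ w := by
    intro w
    have h1 : fderivWithin ℝ φ B x₀ = fderiv ℝ φ x₀ :=
      fderivWithin_of_mem_nhds (closedBall_mem_nhds x₀ hr)
    rw [h1, hgdef]
    exact InnerProductSpace.toDual_symm_apply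
  -- nonnegativity
  have hC₁0 : 0 ≤ C₁ := le_trans (norm_nonneg _) (hC₁ x₀ hx₀B)
  have hC₂0 : 0 ≤ C₂ := le_trans (abs_nonneg _) (hC₂ x₀ hx₀B)
  have hC₃0 : 0 ≤ C₃ := le_trans (ContinuousLinearMap.opNorm_nonneg _) (hC₃ x₀ hx₀B)
  -- points on the segment
  have hmaps : ∀ t ∈ Icc (0:ℝ) 1, x₀ + t • (r • s) ∈ B := by
    intro t ht
    rw [hBdef, mem_closedBall_iff_norm, add_sub_cancel_left, norm_smul, hnorm_rs,
      Real.norm_eq_abs, _root_.abs_of_nonneg ht.1]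
    nlinarith [ht.2, hr.le]
  -- second-order Taylor estimate with the 1/2 factor
  have hTaylor : |φ x - (φ x₀ + ⟪g, x - x₀⟫_ℝ)| ≤ C₃ * r ^ 2 / 2 := by
    have key := aux_half (g := fun t => φ (x₀ + t • (r • s))
        - t * (fderivWithin ℝ φ B x₀ (r • s)))
      (g' := fun t => fderivWithin ℝ φ B (x₀ + t • (r • s)) (r • s)
        - fderivWithin ℝ φ B x₀ (r • s)) (K := C₃ * r ^ 2) ?_ ?_
    · rw [hxx, hgapp]
      have e1 : x₀ + (1:ℝ) • (r • s) = x := by rw [one_smul, hxdef]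
      have e0 : x₀ + (0:ℝ) • (r • s) = x₀ := by rw [zero_smul, add_zero]
      simp only [e1, e0, one_mul, zero_mul, sub_zero] at key
      calc |φ x - (φ x₀ + fderivWithin ℝ φ B x₀ (r • s))|
          = |φ x - fderivWithin ℝ φ B x₀ (r • s) - φ x₀| := by ring_nf
        _ ≤ C₃ * r ^ 2 / 2 := key
    · intro t ht
      have hline : HasDerivWithinAt (fun t : ℝ => x₀ + t • (r • s)) (r • s) (Icc 0 1) t := by
        simpa using ((((hasDerivAt_id t).smul_const (r • s)).const_add x₀).hasDerivWithinAt
          (s := Icc (0:ℝ) 1))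
      have hcomp := (hφd _ (hmaps t ht)).hasFDerivWithinAt.comp_hasDerivWithinAt t hline
        (fun u hu => hmaps u hu)
      have hcomp' : HasDerivWithinAt (fun t : ℝ => φ (x₀ + t • (r • s)))
          (fderivWithin ℝ φ B (x₀ + t • (r • s)) (r • s)) (Icc 0 1) t := hcomp
      have hlin : HasDerivWithinAt (fun t : ℝ => t * (fderivWithin ℝ φ B x₀ (r • s)))
          (fderivWithin ℝ φ B x₀ (r • s)) (Icc 0 1) t :=
        (hasDerivAt_mul_const _).hasDerivWithinAt
      exact hcomp'.sub hlin
    · intro t ht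
      have h1 := hφ'lip _ (hmaps t (Ico_subset_Icc_self ht))
      rw [add_sub_cancel_left, norm_smul, hnorm_rs, Real.norm_eq_abs, _root_.abs_of_nonneg ht.1] at h1
      have h2 : |(fderivWithin ℝ φ B (x₀ + t • (r • s))
            - fderivWithin ℝ φ B x₀) (r • s)|
          ≤ ‖fderivWithin ℝ φ B (x₀ + t • (r • s)) - fderivWithin ℝ φ B x₀‖ * ‖r • s‖ := by
        rw [← Real.norm_eq_abs]
        exact ContinuousLinearMap.le_opNorm _ _
      rw [ContinuousLinearMap.sub_apply] at h2
      show |fderivWithin ℝ φ B (x₀ + t • (r • s)) (r • s)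
          - fderivWithin ℝ φ B x₀ (r • s)| ≤ C₃ * r ^ 2 * t
      calc |fderivWithin ℝ φ B (x₀ + t • (r • s)) (r • s)
            - fderivWithin ℝ φ B x₀ (r • s)|
          ≤ ‖fderivWithin ℝ φ B (x₀ + t • (r • s)) - fderivWithin ℝ φ B x₀‖ * ‖r • s‖ := h2
        _ ≤ (C₃ * (t * r)) * r := by rw [hnorm_rs]; exact mul_le_mul_of_nonneg_right h1 hr.le
        _ = C₃ * r ^ 2 * t := by ring
  -- abbreviations for the two exponentials
  set e₁ : ℂ := Complex.exp (Complex.I * (ω:ℂ) * ((φ x : ℝ) : ℂ)) with he₁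
  set e₂ : ℂ := Complex.exp (Complex.I * (ω:ℂ) * ((φ x₀ + ⟪g, x - x₀⟫_ℝ : ℝ) : ℂ)) with he₂
  -- derivative of δu at x
  have hAx : HasFDerivWithinAt (fun y => ((A y : ℝ) : ℂ))
      (Complex.ofRealCLM.comp (fderivWithin ℝ A B x)) B x :=
    Complex.ofRealCLM.hasFDerivAt.comp_hasFDerivWithinAt x (hAd x hxB).hasFDerivWithinAt
  have hφx : HasFDerivWithinAt (fun y => Complex.I * (ω:ℂ) * ((φ y : ℝ) : ℂ))
      ((Complex.I * (ω:ℂ)) • (Complex.ofRealCLM.comp (fderivWithin ℝ φ B x))) B x :=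
    (Complex.ofRealCLM.hasFDerivAt.comp_hasFDerivWithinAt x
      (hφd x hxB).hasFDerivWithinAt).const_mul _
  have hf1 : HasFDerivWithinAt
      (fun y => (A y : ℂ) * Complex.exp (Complex.I * (ω:ℂ) * (φ y : ℂ)))
      (((A x : ℝ) : ℂ) • (e₁ •
          ((Complex.I * (ω:ℂ)) • (Complex.ofRealCLM.comp (fderivWithin ℝ φ B x))))
        + e₁ • (Complex.ofRealCLM.comp (fderivWithin ℝ A B x))) B x := hAx.mul hφx.cexp
  have hinner : HasFDerivWithinAt
      (fun y => Complex.I * (ω:ℂ) * ((φ x₀ + ⟪g, y - x₀⟫_ℝ : ℝ) : ℂ))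
      ((Complex.I * (ω:ℂ)) • (Complex.ofRealCLM.comp
        (innerSL ℝ g : EuclideanSpace ℝ (Fin d) →L[ℝ] ℝ))) B x := by
    have h0 : HasFDerivAt (fun y : EuclideanSpace ℝ (Fin d) => ⟪g, y - x₀⟫_ℝ)
        (innerSL ℝ g : EuclideanSpace ℝ (Fin d) →L[ℝ] ℝ) x := by
      exact ((innerSL ℝ g).hasFDerivAt (x := x - x₀)).comp x
        ((hasFDerivAt_id x).sub_const x₀)
    have h1 : HasFDerivWithinAt (fun y => (φ x₀ + ⟪g, y - x₀⟫_ℝ))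
        (innerSL ℝ g : EuclideanSpace ℝ (Fin d) →L[ℝ] ℝ) B x :=
      (h0.const_add (φ x₀)).hasFDerivWithinAt
    exact (Complex.ofRealCLM.hasFDerivAt.comp_hasFDerivWithinAt x h1).const_mul _
  have hf2 : HasFDerivWithinAt
      (fun y => (A x₀ : ℂ) * Complex.exp (Complex.I * (ω:ℂ)
        * ((φ x₀ + ⟪g, y - x₀⟫_ℝ : ℝ) : ℂ)))
      (((A x₀ : ℝ) : ℂ) • (e₂ • ((Complex.I * (ω:ℂ)) • (Complex.ofRealCLM.comp
        (innerSL ℝ g : EuclideanSpace ℝ (Fin d) →L[ℝ] ℝ))))) B x :=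
    hinner.cexp.const_mul _
  have hδu' : fderivWithin ℝ δu B x
      = (((A x : ℝ) : ℂ) • (e₁ •
          ((Complex.I * (ω:ℂ)) • (Complex.ofRealCLM.comp (fderivWithin ℝ φ B x))))
        + e₁ • (Complex.ofRealCLM.comp (fderivWithin ℝ A B x)))
        - (((A x₀ : ℝ) : ℂ) • (e₂ • ((Complex.I * (ω:ℂ)) • (Complex.ofRealCLM.comp
            (innerSL ℝ g : EuclideanSpace ℝ (Fin d) →L[ℝ] ℝ))))) := by
    have hfun : δu = fun y => (A y : ℂ) * Complex.exp (Complex.I * (ω:ℂ) * (φ y : ℂ))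
        - (A x₀ : ℂ) * Complex.exp (Complex.I * (ω:ℂ)
            * ((φ x₀ + ⟪g, y - x₀⟫_ℝ : ℝ) : ℂ)) := funext hδu
    rw [hfun]
    exact (hf1.sub hf2).fderivWithin (hBuniq x hxB)
  have happ : fderivWithin ℝ δu B x s
      = (A x : ℂ) * (e₁ * (Complex.I * (ω:ℂ) * ((fderivWithin ℝ φ B x s : ℝ) : ℂ)))
        + e₁ * ((fderivWithin ℝ A B x s : ℝ) : ℂ)
        - (A x₀ : ℂ) * (e₂ * (Complex.I * (ω:ℂ) * ((⟪g, s⟫_ℝ : ℝ) : ℂ))) := by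
    rw [hδu']
    simp only [ContinuousLinearMap.sub_apply, ContinuousLinearMap.add_apply,
      ContinuousLinearMap.smul_apply, ContinuousLinearMap.coe_comp', Function.comp_apply,
      Complex.ofRealCLM_apply, innerSL_apply_apply, smul_eq_mul]
  -- scalar abbreviations
  set α : ℝ := fderivWithin ℝ A B x s with hα'
  set p : ℝ := fderivWithin ℝ φ B x s with hp'
  set q : ℝ := ⟪g, s⟫_ℝ with hq'
  set T1 : ℂ := (α:ℂ) * e₁ / (Complex.I * (ω:ℂ) * (η:ℂ)) with hT1
  set T2 : ℂ := (A x : ℂ) * ((p:ℂ) - (q:ℂ)) * e₁ / (η:ℂ) with hT2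
  set T3 : ℂ := ((A x : ℂ) - (A x₀ : ℂ)) * (q:ℂ) * e₁ / (η:ℂ) with hT3
  set T4 : ℂ := (A x₀ : ℂ) * (q:ℂ) * (e₁ - e₂) / (η:ℂ) with hT4
  set T5 : ℂ := ((A x : ℂ) - (A x₀ : ℂ)) * e₁ with hT5
  set T6 : ℂ := (A x₀ : ℂ) * (e₁ - e₂) with hT6
  have hωC : (ω:ℂ) ≠ 0 := Complex.ofReal_ne_zero.2 hω.ne'
  have hηC : (η:ℂ) ≠ 0 := Complex.ofReal_ne_zero.2 hη.ne'
  have heq : 1 / (Complex.I * (ω:ℂ) * (η:ℂ)) * fderivWithin ℝ δu B x s + δu x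
      = T1 + T2 + T3 + T4 + T5 + T6 := by
    rw [happ, hδu x, hT1, hT2, hT3, hT4, hT5, hT6]
    exact aux_alg (Complex.I * (ω:ℂ)) (η:ℂ) (A x : ℂ) (A x₀ : ℂ) (α:ℂ) (p:ℂ) (q:ℂ) e₁ e₂
      (mul_ne_zero Complex.I_ne_zero hωC) hηC
  -- modulus computations
  have habs1 : ‖e₁‖ = 1 := by
    rw [he₁, Complex.norm_exp]
    simp
  have hαb : |α| ≤ C₁ := by
    rw [hα', ← Real.norm_eq_abs]
    calc ‖fderivWithin ℝ A B x s‖ ≤ ‖fderivWithin ℝ A B x‖ * ‖s‖ :=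
          (fderivWithin ℝ A B x).le_opNorm s
      _ = ‖fderivWithin ℝ A B x‖ := by rw [hs, mul_one]
      _ ≤ C₁ := hC₁ x hxB
  have hpqb : |p - q| ≤ C₃ * r := by
    rw [hp', hq', hgapp s, ← ContinuousLinearMap.sub_apply, ← Real.norm_eq_abs]
    calc ‖(fderivWithin ℝ φ B x - fderivWithin ℝ φ B x₀) s‖
        ≤ ‖fderivWithin ℝ φ B x - fderivWithin ℝ φ B x₀‖ * ‖s‖ :=
          (fderivWithin ℝ φ B x - fderivWithin ℝ φ B x₀).le_opNorm s
      _ = ‖fderivWithin ℝ φ B x - fderivWithin ℝ φ B x₀‖ := by rw [hs, mul_one]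
      _ ≤ C₃ * r := by
          have h := hφ'lip x hxB
          rwa [hxx, hnorm_rs] at h
  have haab : |A x - A x₀| ≤ C₁ * r := by
    have h := hAlip x hxB
    rwa [hxx, hnorm_rs] at h
  have hqb : |q| ≤ η := by
    rw [hq']
    calc |⟪g, s⟫_ℝ| ≤ ‖g‖ * ‖s‖ := abs_real_inner_le_norm g s
      _ = η := by rw [hs, mul_one, hηdef]
  have hεb : ‖e₁ - e₂‖ ≤ ω * (C₃ * r ^ 2 / 2) := by
    have h := aux_exp_sub (ω * φ x) (ω * (φ x₀ + ⟪g, x - x₀⟫_ℝ))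
    have h1 : ((ω * φ x : ℝ) : ℂ) * Complex.I = Complex.I * (ω:ℂ) * ((φ x : ℝ) : ℂ) := by
      push_cast; ring
    have h2 : ((ω * (φ x₀ + ⟪g, x - x₀⟫_ℝ) : ℝ) : ℂ) * Complex.I
        = Complex.I * (ω:ℂ) * ((φ x₀ + ⟪g, x - x₀⟫_ℝ : ℝ) : ℂ) := by
      push_cast; ring
    rw [h1, h2, ← he₁, ← he₂, ← mul_sub, abs_mul, _root_.abs_of_pos hω] at h
    exact h.trans (mul_le_mul_of_nonneg_left hTaylor hω.le)
  -- bounds on the six terms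
  have hT1b : ‖T1‖ ≤ C₁ / (ω * η) := by
    rw [hT1]
    simp only [norm_div, norm_mul, Complex.norm_I, Complex.norm_real, Real.norm_eq_abs, habs1, one_mul, mul_one]
    rw [_root_.abs_of_pos hω, _root_.abs_of_pos hη]
    gcongr
  have hT2b : ‖T2‖ ≤ C₂ * (C₃ * r) / η := by
    rw [hT2]
    simp only [← Complex.ofReal_sub, norm_div, norm_mul, Complex.norm_real, Real.norm_eq_abs, habs1, mul_one]
    rw [_root_.abs_of_pos hη]
    gcongr
    exact hC₂ x hxB
  have hT3b : ‖T3‖ ≤ C₁ * r := by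
    rw [hT3]
    simp only [← Complex.ofReal_sub, norm_div, norm_mul, Complex.norm_real, Real.norm_eq_abs, habs1, mul_one]
    rw [_root_.abs_of_pos hη]
    have h : |A x - A x₀| * |q| / η ≤ C₁ * r * η / η := by
      gcongr
    have h2 : C₁ * r * η / η = C₁ * r := by
      rw [mul_div_assoc, div_self hη.ne', mul_one]
    rwa [h2] at h
  have hT4b : ‖T4‖ ≤ C₂ * (ω * (C₃ * r ^ 2 / 2)) := by
    rw [hT4]
    simp only [norm_div, norm_mul, Complex.norm_real, Real.norm_eq_abs]
    rw [_root_.abs_of_pos hη]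
    have h : |A x₀| * |q| * ‖e₁ - e₂‖ / η
        ≤ C₂ * η * (ω * (C₃ * r ^ 2 / 2)) / η := by
      gcongr
      exact hC₂ x₀ hx₀B
    have h2 : C₂ * η * (ω * (C₃ * r ^ 2 / 2)) / η = C₂ * (ω * (C₃ * r ^ 2 / 2)) := by
      field_simp
    rwa [h2] at h
  have hT5b : ‖T5‖ ≤ C₁ * r := by
    rw [hT5]
    simp only [← Complex.ofReal_sub, norm_mul, Complex.norm_real, Real.norm_eq_abs, habs1, mul_one]
    exact haab
  have hT6b : ‖T6‖ ≤ C₂ * (ω * (C₃ * r ^ 2 / 2)) := by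
    rw [hT6, norm_mul, Complex.norm_real, Real.norm_eq_abs]
    exact mul_le_mul (hC₂ x₀ hx₀B) hεb (norm_nonneg _) hC₂0
  -- put everything together
  rw [heq]
  have t1 := norm_add_le (T1 + T2 + T3 + T4 + T5) T6
  have t2 := norm_add_le (T1 + T2 + T3 + T4) T5
  have t3 := norm_add_le (T1 + T2 + T3) T4
  have t4 := norm_add_le (T1 + T2) T3
  have t5 := norm_add_le T1 T2
  have hsum : ‖T1 + T2 + T3 + T4 + T5 + T6‖
      ≤ C₁ / (ω * η) + C₂ * (C₃ * r) / η + C₁ * r + C₂ * (ω * (C₃ * r ^ 2 / 2))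
        + C₁ * r + C₂ * (ω * (C₃ * r ^ 2 / 2)) := by
    linarith
  calc ‖T1 + T2 + T3 + T4 + T5 + T6‖
      ≤ C₁ / (ω * η) + C₂ * (C₃ * r) / η + C₁ * r + C₂ * (ω * (C₃ * r ^ 2 / 2))
        + C₁ * r + C₂ * (ω * (C₃ * r ^ 2 / 2)) := hsum
    _ = C₁ / (ω * η) + 2 * r * C₁ + (r * C₂ / η + ω * r ^ 2 * C₂) * C₃ := by ring
end
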